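/- arXiv:1610.02623 — 7 statements merged into one kernel-verified Lean document; each statement's English description precedes it below -/
import Mathlib

section
/- Let V_w : ℝ → ℂ be differentiable everywhere with V_w ∈ L²(ℝ) and V_w′ ∈ L²(ℝ). Then the operator B defined by Bf(v) = ∫_ℝ (V_w(v − v′) − V_w(−v′))/v · f(v′) dv′ (for v ≠ 0) is a bounded linear operator on L²(ℝ); in fact ‖Bf‖²_{L²(ℝ)} ≤ 8(‖V_w‖²_{L²} + ‖V_w′‖²_{L²})·‖f‖²_{L²(ℝ)} for every f ∈ L²(ℝ). -/
set_option maxHeartbeats 1000000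


open MeasureTheory Real

/-- The singularity-free Wigner operator
`B f(v) = ∫ (V_w(v − v′) − V_w(−v′))/v · f(v′) dv′`. -/
noncomputable def Bop (Vw : ℝ → ℂ) (f : ℝ → ℂ) (v : ℝ) : ℂ :=
  ∫ v' : ℝ, (Vw (v - v') - Vw (-v')) / (v : ℂ) * f v'

section Aux

open Filter
open scoped ENNReal

private lemma mul_int {g f : ℝ → ℂ} (hg : MemLp g 2 (volume : Measure ℝ))
    (hf : MemLp f 2 (volume : Measure ℝ)) :
    Integrable (fun x => g x * f x) volume := by
  have h : (1 : ℝ≥0∞) / 1 = 1 / 2 + 1 / 2 := by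
    rw [one_div_one, ENNReal.div_add_div_same, one_add_one_eq_two,
      ENNReal.div_self two_ne_zero ENNReal.ofNat_ne_top]
  have := memLp_one_iff_integrable.mp (hf.smul (r := 1) hg)
  simpa [Pi.smul_apply', smul_eq_mul, Pi.mul_def] using this

private lemma cs_norm {g f : ℝ → ℂ} (hg : MemLp g 2 (volume : Measure ℝ))
    (hf : MemLp f 2 (volume : Measure ℝ)) :
    ∫ x, ‖g x‖ * ‖f x‖ ≤
      Real.sqrt (∫ x, ‖g x‖ ^ 2) * Real.sqrt (∫ x, ‖f x‖ ^ 2) := by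
  have hpq : Real.HolderConjugate 2 2 := Real.HolderConjugate.two_two
  have hg2 : MemLp (fun x => ‖g x‖) (ENNReal.ofReal 2) volume := by
    simpa [ENNReal.ofReal_ofNat] using hg.norm
  have hf2 : MemLp (fun x => ‖f x‖) (ENNReal.ofReal 2) volume := by
    simpa [ENNReal.ofReal_ofNat] using hf.norm
  have h := integral_mul_le_Lp_mul_Lq_of_nonneg hpq
    (Filter.Eventually.of_forall fun x => norm_nonneg (g x))
    (Filter.Eventually.of_forall fun x => norm_nonneg (f x)) hg2 hf2
  calc ∫ x, ‖g x‖ * ‖f x‖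
      ≤ (∫ x, ‖g x‖ ^ (2:ℝ)) ^ (1/2:ℝ) * (∫ x, ‖f x‖ ^ (2:ℝ)) ^ (1/2:ℝ) := h
    _ = Real.sqrt (∫ x, ‖g x‖ ^ 2) * Real.sqrt (∫ x, ‖f x‖ ^ 2) := by
        have h2 : ∀ y : ℝ, y ^ (2:ℝ) = y ^ 2 := fun y => by
          rw [show (2:ℝ) = ((2:ℕ):ℝ) by norm_num, Real.rpow_natCast]
        simp_rw [Real.sqrt_eq_rpow, h2]

private lemma cs {g f : ℝ → ℂ} (hg : MemLp g 2 (volume : Measure ℝ))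
    (hf : MemLp f 2 (volume : Measure ℝ)) :
    ‖∫ x, g x * f x‖ ≤
      Real.sqrt (∫ x, ‖g x‖ ^ 2) * Real.sqrt (∫ x, ‖f x‖ ^ 2) := by
  calc ‖∫ x, g x * f x‖ ≤ ∫ x, ‖g x * f x‖ := norm_integral_le_integral_norm _
    _ = ∫ x, ‖g x‖ * ‖f x‖ := by simp [norm_mul]
    _ ≤ _ := cs_norm hg hf

private lemma memLp_shift {V : ℝ → ℂ} (hV : MemLp V 2 (volume : Measure ℝ)) (v : ℝ) :
    MemLp (fun x => V (v - x)) 2 volume :=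
  hV.comp_measurePreserving (Measure.measurePreserving_sub_left volume v)

private lemma memLp_shift' {V : ℝ → ℂ} (hV : MemLp V 2 (volume : Measure ℝ)) (v : ℝ) :
    MemLp (fun x => V (x - v)) 2 volume :=
  hV.comp_measurePreserving (measurePreserving_sub_right volume v)

private lemma memLp_neg {V : ℝ → ℂ} (hV : MemLp V 2 (volume : Measure ℝ)) :
    MemLp (fun x => V (-x)) 2 volume :=
  hV.comp_measurePreserving (Measure.measurePreserving_neg volume)

private lemma int_shift (V : ℝ → ℂ) (v : ℝ) :
    ∫ x, ‖V (v - x)‖ ^ 2 = ∫ x, ‖V x‖ ^ 2 :=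
  integral_sub_left_eq_self (fun u => ‖V u‖ ^ 2) volume v

private lemma int_neg (V : ℝ → ℂ) :
    ∫ x, ‖V (-x)‖ ^ 2 = ∫ x, ‖V x‖ ^ 2 :=
  integral_neg_eq_self (fun u => ‖V u‖ ^ 2) volume

private lemma intInt {V : ℝ → ℂ} (hV : MemLp V 2 (volume : Measure ℝ)) (v' a b : ℝ) :
    IntervalIntegrable (fun s => V (s - v')) volume a b := by
  rw [intervalIntegrable_iff]
  haveI : IsFiniteMeasure (volume.restrict (Set.uIoc a b)) :=
    ⟨by rw [Measure.restrict_apply_univ]; exact measure_Ioc_lt_top⟩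
  exact ((memLp_shift' hV v').restrict _).integrable one_le_two

private lemma ftc {Vw Vw' : ℝ → ℂ} (hderiv : ∀ u : ℝ, HasDerivAt Vw (Vw' u) u)
    (hVw' : MemLp Vw' 2 (volume : Measure ℝ)) (v v' : ℝ) :
    Vw (v - v') - Vw (-v') = ∫ s in (0:ℝ)..v, Vw' (s - v') := by
  have h := intervalIntegral.integral_eq_sub_of_hasDerivAt
    (f := fun s => Vw (s - v')) (f' := fun s => Vw' (s - v'))
    (a := 0) (b := v) ?_ (intInt hVw' v' 0 v)
  · rw [h]; simp
  · intro s _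
    have h1 : HasDerivAt (fun s : ℝ => s - v') 1 s := (hasDerivAt_id s).sub_const v'
    simpa [Function.comp_def] using HasDerivAt.scomp s (hderiv (s - v')) h1

private lemma fubini {Vw' f : ℝ → ℂ} (hVw'm : Measurable Vw')
    (hVw' : MemLp Vw' 2 (volume : Measure ℝ))
    (hf : MemLp f 2 (volume : Measure ℝ)) (a b : ℝ) :
    ∫ v', (∫ s in Set.Ioc a b, Vw' (s - v')) * f v' =
      ∫ s in Set.Ioc a b, ∫ v', Vw' (s - v') * f v' := by
  haveI : IsFiniteMeasure (volume.restrict (Set.Ioc a b)) :=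
    ⟨by rw [Measure.restrict_apply_univ]; exact measure_Ioc_lt_top⟩
  have hsm : AEStronglyMeasurable (Function.uncurry fun s v' => Vw' (s - v') * f v')
      ((volume.restrict (Set.Ioc a b)).prod volume) := by
    have h1 : Measurable fun p : ℝ × ℝ => Vw' (p.1 - p.2) :=
      hVw'm.comp (measurable_fst.sub measurable_snd)
    exact h1.aestronglyMeasurable.mul hf.1.comp_snd
  have hint : Integrable (Function.uncurry fun s v' => Vw' (s - v') * f v')
      ((volume.restrict (Set.Ioc a b)).prod volume) := by
    rw [integrable_prod_iff hsm]
    refine ⟨Filter.Eventually.of_forall fun s => mul_int (memLp_shift hVw' s) hf, ?_⟩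
    refine Integrable.mono' (integrable_const
      (Real.sqrt (∫ x, ‖Vw' x‖ ^ 2) * Real.sqrt (∫ x, ‖f x‖ ^ 2))) ?_ ?_
    · exact hsm.norm.integral_prod_right'
    · refine Filter.Eventually.of_forall fun s => ?_
      have hnn : 0 ≤ ∫ v', ‖Vw' (s - v') * f v'‖ :=
        integral_nonneg fun _ => norm_nonneg _
      simp only [Function.uncurry_apply_pair]
      rw [Real.norm_of_nonneg hnn]
      calc ∫ v', ‖Vw' (s - v') * f v'‖ = ∫ v', ‖Vw' (s - v')‖ * ‖f v'‖ := by
            simp [norm_mul]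
        _ ≤ Real.sqrt (∫ v', ‖Vw' (s - v')‖ ^ 2) * Real.sqrt (∫ x, ‖f x‖ ^ 2) :=
            cs_norm (memLp_shift hVw' s) hf
        _ = _ := by rw [int_shift]
  have h := integral_integral_swap hint
  have h2 : ∀ v' : ℝ, ∫ s in Set.Ioc a b, Vw' (s - v') * f v'
      = (∫ s in Set.Ioc a b, Vw' (s - v')) * f v' := fun v' => integral_mul_const _ _
  simp_rw [← h2]
  exact h.symm

private lemma boundB {Vw Vw' f : ℝ → ℂ} (hderiv : ∀ u : ℝ, HasDerivAt Vw (Vw' u) u)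
    (hVw' : MemLp Vw' 2 (volume : Measure ℝ))
    (hf : MemLp f 2 (volume : Measure ℝ)) (v : ℝ) :
    ‖∫ v', (Vw (v - v') - Vw (-v')) * f v'‖ ≤
      |v| * (Real.sqrt (∫ x, ‖Vw' x‖ ^ 2) * Real.sqrt (∫ x, ‖f x‖ ^ 2)) := by
  have hVw'm : Measurable Vw' := by
    have : Vw' = deriv Vw := funext fun u => ((hderiv u).deriv).symm
    rw [this]; exact measurable_deriv _
  set C := Real.sqrt (∫ x, ‖Vw' x‖ ^ 2) * Real.sqrt (∫ x, ‖f x‖ ^ 2) with hC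
  have h1 : (∫ v', (Vw (v - v') - Vw (-v')) * f v')
      = ∫ v', (∫ s in (0:ℝ)..v, Vw' (s - v')) * f v' := by
    congr 1; funext v'; rw [ftc hderiv hVw' v v']
  have key : ∫ v', (∫ s in (0:ℝ)..v, Vw' (s - v')) * f v'
      = ∫ s in (0:ℝ)..v, ∫ v', Vw' (s - v') * f v' := by
    rcases le_total 0 v with hv | hv
    · simp_rw [intervalIntegral.integral_of_le hv]
      exact fubini hVw'm hVw' hf 0 v
    · simp_rw [intervalIntegral.integral_of_ge hv, neg_mul]
      rw [integral_neg, fubini hVw'm hVw' hf v 0]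
  rw [h1, key]
  have hb : ∀ s ∈ Set.uIoc (0:ℝ) v, ‖∫ v', Vw' (s - v') * f v'‖ ≤ C := by
    intro s _
    calc ‖∫ v', Vw' (s - v') * f v'‖
        ≤ Real.sqrt (∫ v', ‖Vw' (s - v')‖ ^ 2) * Real.sqrt (∫ x, ‖f x‖ ^ 2) :=
          cs (memLp_shift hVw' s) hf
      _ = C := by rw [int_shift]
  calc ‖∫ s in (0:ℝ)..v, ∫ v', Vw' (s - v') * f v'‖ ≤ C * |v - 0| :=
        intervalIntegral.norm_integral_le_of_norm_le_const hb
    _ = |v| * C := by rw [sub_zero, mul_comm]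

private lemma boundA {Vw f : ℝ → ℂ} (hVw : MemLp Vw 2 (volume : Measure ℝ))
    (hf : MemLp f 2 (volume : Measure ℝ)) (v : ℝ) :
    ‖∫ v', (Vw (v - v') - Vw (-v')) * f v'‖ ≤
      2 * (Real.sqrt (∫ x, ‖Vw x‖ ^ 2) * Real.sqrt (∫ x, ‖f x‖ ^ 2)) := by
  set C := Real.sqrt (∫ x, ‖Vw x‖ ^ 2) * Real.sqrt (∫ x, ‖f x‖ ^ 2) with hC
  have h1 : Integrable (fun v' => Vw (v - v') * f v') volume :=
    mul_int (memLp_shift hVw v) hf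
  have h2 : Integrable (fun v' => Vw (-v') * f v') volume :=
    mul_int (memLp_neg hVw) hf
  have hsplit : (∫ v', (Vw (v - v') - Vw (-v')) * f v')
      = (∫ v', Vw (v - v') * f v') - ∫ v', Vw (-v') * f v' := by
    rw [← integral_sub h1 h2]; congr 1; funext v'; ring
  rw [hsplit]
  have e1 : ‖∫ v', Vw (v - v') * f v'‖ ≤ C := by
    calc ‖∫ v', Vw (v - v') * f v'‖
        ≤ Real.sqrt (∫ v', ‖Vw (v - v')‖ ^ 2) * Real.sqrt (∫ x, ‖f x‖ ^ 2) :=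
          cs (memLp_shift hVw v) hf
      _ = C := by rw [int_shift]
  have e2 : ‖∫ v', Vw (-v') * f v'‖ ≤ C := by
    calc ‖∫ v', Vw (-v') * f v'‖
        ≤ Real.sqrt (∫ v', ‖Vw (-v')‖ ^ 2) * Real.sqrt (∫ x, ‖f x‖ ^ 2) :=
          cs (memLp_neg hVw) hf
      _ = C := by rw [int_neg]
  calc ‖(∫ v', Vw (v - v') * f v') - ∫ v', Vw (-v') * f v'‖
      ≤ ‖∫ v', Vw (v - v') * f v'‖ + ‖∫ v', Vw (-v') * f v'‖ := norm_sub_le _ _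
    _ ≤ C + C := add_le_add e1 e2
    _ = 2 * C := by ring

end Aux

section Main
open Filter Set
open scoped ENNReal

private lemma sq_cast (y : ℝ) : y ^ (2:ℝ) = y ^ 2 := by
  rw [show (2:ℝ) = ((2:ℕ):ℝ) by norm_num, Real.rpow_natCast]

private lemma nnnorm_sq_eq (x : ℂ) :
    (‖x‖₊ : ℝ≥0∞) ^ (2:ℝ) = ENNReal.ofReal (‖x‖ ^ 2) := by
  rw [show (‖x‖₊ : ℝ≥0∞) = ENNReal.ofReal ‖x‖ from (ofReal_norm x).symm, ← sq_cast ‖x‖]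
  exact ENNReal.ofReal_rpow_of_nonneg (norm_nonneg x) (by norm_num)

private lemma eLpNorm_sq_eq (g : ℝ → ℂ) :
    eLpNorm g 2 (volume : Measure ℝ) ^ 2 = ∫⁻ v, (‖g v‖₊ : ℝ≥0∞) ^ (2:ℝ) := by
  rw [eLpNorm_eq_lintegral_rpow_enorm_toReal two_ne_zero ENNReal.ofNat_ne_top]
  rw [ENNReal.toReal_ofNat, ← ENNReal.rpow_natCast, ← ENNReal.rpow_mul]
  norm_num
  rfl

/-- If `V_w` is everywhere differentiable with
`V_w, V_w′ ∈ L²(ℝ)` (i.e. `V_w ∈ H¹(ℝ)`), then the singularity-free operator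
`B` is bounded on `L²(ℝ)`:
`‖Bf‖₂² ≤ 8 (‖V_w‖₂² + ‖V_w′‖₂²) ‖f‖₂²` for every `f ∈ L²(ℝ)`. -/
theorem stmt1 (Vw Vw' : ℝ → ℂ)
    (hderiv : ∀ u : ℝ, HasDerivAt Vw (Vw' u) u)
    (hVw : MemLp Vw 2 (volume : Measure ℝ))
    (hVw' : MemLp Vw' 2 (volume : Measure ℝ))
    (f : ℝ → ℂ) (hf : MemLp f 2 (volume : Measure ℝ)) :
    eLpNorm (Bop Vw f) 2 (volume : Measure ℝ) ^ 2 ≤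
      ENNReal.ofReal (8 * ((∫ u : ℝ, ‖Vw u‖ ^ 2) + ∫ u : ℝ, ‖Vw' u‖ ^ 2)) *
        eLpNorm f 2 (volume : Measure ℝ) ^ 2 := by
  have hN : (0:ℝ) ≤ ∫ u : ℝ, ‖Vw u‖ ^ 2 := integral_nonneg fun _ => sq_nonneg _
  have hN' : (0:ℝ) ≤ ∫ u : ℝ, ‖Vw' u‖ ^ 2 := integral_nonneg fun _ => sq_nonneg _
  have hNf : (0:ℝ) ≤ ∫ u : ℝ, ‖f u‖ ^ 2 := integral_nonneg fun _ => sq_nonneg _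
  set a := Real.sqrt (∫ u : ℝ, ‖Vw u‖ ^ 2) with ha
  set b := Real.sqrt (∫ u : ℝ, ‖Vw' u‖ ^ 2) with hb
  set c := Real.sqrt (∫ u : ℝ, ‖f u‖ ^ 2) with hc
  have ha0 : 0 ≤ a := Real.sqrt_nonneg _
  have hb0 : 0 ≤ b := Real.sqrt_nonneg _
  have hc0 : 0 ≤ c := Real.sqrt_nonneg _
  -- norm formula for Bop
  have hnorm : ∀ v : ℝ, ‖Bop Vw f v‖
      = |v|⁻¹ * ‖∫ v', (Vw (v - v') - Vw (-v')) * f v'‖ := by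
    intro v
    have hBop : Bop Vw f v = ((v:ℂ))⁻¹ * ∫ v', (Vw (v - v') - Vw (-v')) * f v' := by
      rw [Bop, ← integral_const_mul]
      congr 1; funext v'; ring
    rw [hBop, norm_mul, norm_inv]
    congr 2
    simp [Complex.norm_real]
  -- the two pointwise bounds
  have hB1 : ∀ v : ℝ, ‖Bop Vw f v‖ ≤ b * c := by
    intro v
    rcases eq_or_ne v 0 with rfl | hv
    · rw [hnorm 0]; simp; positivity
    · rw [hnorm v]
      calc |v|⁻¹ * ‖∫ v', (Vw (v - v') - Vw (-v')) * f v'‖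
          ≤ |v|⁻¹ * (|v| * (b * c)) :=
            mul_le_mul_of_nonneg_left (boundB hderiv hVw' hf v)
              (inv_nonneg.2 (abs_nonneg v))
        _ = b * c := by
            rw [← mul_assoc, inv_mul_cancel₀ (abs_ne_zero.2 hv), one_mul]
  have hB2 : ∀ v : ℝ, ‖Bop Vw f v‖ ≤ |v|⁻¹ * (2 * (a * c)) := by
    intro v
    rw [hnorm v]
    exact mul_le_mul_of_nonneg_left (boundA hVw hf v) (inv_nonneg.2 (abs_nonneg v))
  -- rewrite both sides
  have hfint : Integrable (fun u => ‖f u‖ ^ 2) volume := by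
    have h := hf.integrable_norm_rpow two_ne_zero ENNReal.ofNat_ne_top
    refine h.congr (Filter.Eventually.of_forall fun u => ?_)
    simp only [ENNReal.toReal_ofNat]
    exact sq_cast _
  have hfL : eLpNorm f 2 (volume : Measure ℝ) ^ 2
      = ENNReal.ofReal (∫ u : ℝ, ‖f u‖ ^ 2) := by
    rw [eLpNorm_sq_eq]
    simp_rw [nnnorm_sq_eq]
    rw [← ofReal_integral_eq_lintegral_ofReal hfint
      (Filter.Eventually.of_forall fun u => sq_nonneg _)]
  rw [eLpNorm_sq_eq, hfL]
  -- split the integral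
  set S := Set.Ioc (-1:ℝ) 1 with hS
  have hSm : MeasurableSet S := measurableSet_Ioc
  rw [← lintegral_add_compl (fun v => (‖Bop Vw f v‖₊ : ℝ≥0∞) ^ (2:ℝ)) hSm]
  have hcompl : Sᶜ = Set.Iic (-1:ℝ) ∪ Set.Ioi 1 := by
    ext x
    simp only [hS, Set.mem_compl_iff, Set.mem_Ioc, Set.mem_union, Set.mem_Iic,
      Set.mem_Ioi, not_and_or, not_lt, not_le]
  -- part 1
  have part1 : ∫⁻ v in S, (‖Bop Vw f v‖₊ : ℝ≥0∞) ^ (2:ℝ)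
      ≤ ENNReal.ofReal (2 * (b * c) ^ 2) := by
    calc ∫⁻ v in S, (‖Bop Vw f v‖₊ : ℝ≥0∞) ^ (2:ℝ)
        ≤ ∫⁻ _ in S, ENNReal.ofReal ((b * c) ^ 2) := by
          refine lintegral_mono fun v => ?_
          rw [nnnorm_sq_eq]
          exact ENNReal.ofReal_le_ofReal
            (pow_le_pow_left₀ (norm_nonneg _) (hB1 v) 2)
      _ = ENNReal.ofReal ((b * c) ^ 2) * volume S := MeasureTheory.setLIntegral_const _ _
      _ = ENNReal.ofReal (2 * (b * c) ^ 2) := by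
          rw [show volume S = ENNReal.ofReal 2 by
            rw [hS, Real.volume_Ioc]; norm_num]
          rw [← ENNReal.ofReal_mul (by positivity)]
          ring_nf
  -- part 2
  have hIoi : IntegrableOn (fun v : ℝ => (v ^ 2)⁻¹) (Set.Ioi (1:ℝ)) volume := by
    have h := integrableOn_Ioi_rpow_of_lt (by norm_num : (-2:ℝ) < -1) one_pos
    refine h.congr_fun (fun x hx => ?_) measurableSet_Ioi
    have hx0 : (0:ℝ) < x := lt_trans one_pos hx
    show x ^ (-2:ℝ) = (x ^ 2)⁻¹
    rw [Real.rpow_neg hx0.le, sq_cast]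
  have hIic : IntegrableOn (fun v : ℝ => (v ^ 2)⁻¹) (Set.Iic (-1:ℝ)) volume := by
    have key := (Measure.measurePreserving_neg (volume : Measure ℝ)).integrableOn_comp_preimage
      (Homeomorph.neg ℝ).measurableEmbedding
      (f := fun v : ℝ => (v ^ 2)⁻¹) (s := Set.Iic (-1:ℝ))
    refine key.mp ?_
    have h1 : (Neg.neg ⁻¹' Set.Iic (-1:ℝ)) = Set.Ici (1:ℝ) := by
      ext x; simp [le_neg]
    have h2 : ((fun v : ℝ => (v ^ 2)⁻¹) ∘ Neg.neg) = fun v : ℝ => (v ^ 2)⁻¹ := by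
      funext x; simp [Function.comp, neg_sq]
    rw [h1, h2, integrableOn_Ici_iff_integrableOn_Ioi]
    exact hIoi
  have hvalIoi : ∫ v in Set.Ioi (1:ℝ), (v ^ 2)⁻¹ = 1 := by
    have h := integral_Ioi_rpow_of_lt (by norm_num : (-2:ℝ) < -1) one_pos
    rw [setIntegral_congr_fun measurableSet_Ioi (g := fun x : ℝ => x ^ (-2:ℝ))
      (fun x hx => by
        have hx0 : (0:ℝ) < x := lt_trans one_pos hx
        show (x ^ 2)⁻¹ = x ^ (-2:ℝ)
        rw [Real.rpow_neg hx0.le, sq_cast])]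
    rw [h]; norm_num
  have hvalIic : ∫ v in Set.Iic (-1:ℝ), (v ^ 2)⁻¹ = 1 := by
    rw [← integral_comp_neg_Ioi]
    simp only [neg_sq]
    exact hvalIoi
  have hdisj : Disjoint (Set.Iic (-1:ℝ)) (Set.Ioi (1:ℝ)) := by
    apply Set.disjoint_left.mpr
    intro x hx hx'
    simp only [Set.mem_Iic, Set.mem_Ioi] at hx hx'
    linarith
  have hval : ∫ v in Sᶜ, ((v:ℝ) ^ 2)⁻¹ = 2 := by
    rw [hcompl, setIntegral_union hdisj measurableSet_Ioi hIic hIoi, hvalIic, hvalIoi]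
    norm_num
  have hcint : IntegrableOn (fun v : ℝ => (2 * (a * c)) ^ 2 * (v ^ 2)⁻¹) Sᶜ volume := by
    rw [hcompl]
    exact ((hIic.union hIoi).const_mul _)
  have part2 : ∫⁻ v in Sᶜ, (‖Bop Vw f v‖₊ : ℝ≥0∞) ^ (2:ℝ)
      ≤ ENNReal.ofReal (8 * (a * c) ^ 2) := by
    have hmono : ∫⁻ v in Sᶜ, (‖Bop Vw f v‖₊ : ℝ≥0∞) ^ (2:ℝ)
        ≤ ∫⁻ v in Sᶜ, ENNReal.ofReal ((2 * (a * c)) ^ 2 * (v ^ 2)⁻¹) := by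
      refine setLIntegral_mono' hSm.compl fun v hv => ?_
      rw [nnnorm_sq_eq]
      refine ENNReal.ofReal_le_ofReal ?_
      have h1 : ‖Bop Vw f v‖ ^ 2 ≤ (|v|⁻¹ * (2 * (a * c))) ^ 2 :=
        pow_le_pow_left₀ (norm_nonneg _) (hB2 v) 2
      refine h1.trans (le_of_eq ?_)
      rw [mul_pow, ← sq_abs v, ← inv_pow]
      ring
    refine hmono.trans ?_
    rw [← ofReal_integral_eq_lintegral_ofReal hcint
      (Filter.Eventually.of_forall fun v => by positivity)]
    refine ENNReal.ofReal_le_ofReal ?_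
    rw [MeasureTheory.integral_const_mul, hval]
    ring_nf
    exact le_refl _
  -- combine
  calc (∫⁻ v in S, (‖Bop Vw f v‖₊ : ℝ≥0∞) ^ (2:ℝ))
        + ∫⁻ v in Sᶜ, (‖Bop Vw f v‖₊ : ℝ≥0∞) ^ (2:ℝ)
      ≤ ENNReal.ofReal (2 * (b * c) ^ 2) + ENNReal.ofReal (8 * (a * c) ^ 2) :=
        add_le_add part1 part2
    _ = ENNReal.ofReal (2 * (b * c) ^ 2 + 8 * (a * c) ^ 2) := by
        rw [← ENNReal.ofReal_add (by positivity) (by positivity)]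
    _ ≤ ENNReal.ofReal (8 * ((∫ u : ℝ, ‖Vw u‖ ^ 2) + ∫ u : ℝ, ‖Vw' u‖ ^ 2)
          * ∫ u : ℝ, ‖f u‖ ^ 2) := by
        refine ENNReal.ofReal_le_ofReal ?_
        have ha2 : a ^ 2 = ∫ u : ℝ, ‖Vw u‖ ^ 2 := Real.sq_sqrt hN
        have hb2 : b ^ 2 = ∫ u : ℝ, ‖Vw' u‖ ^ 2 := Real.sq_sqrt hN'
        have hc2 : c ^ 2 = ∫ u : ℝ, ‖f u‖ ^ 2 := Real.sq_sqrt hNf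
        rw [← ha2, ← hb2, ← hc2]
        nlinarith [sq_nonneg a, sq_nonneg b, sq_nonneg c]
    _ = ENNReal.ofReal (8 * ((∫ u : ℝ, ‖Vw u‖ ^ 2) + ∫ u : ℝ, ‖Vw' u‖ ^ 2))
          * ENNReal.ofReal (∫ u : ℝ, ‖f u‖ ^ 2) := by
        rw [← ENNReal.ofReal_mul (by positivity), mul_assoc]
end Main
end

section
/- Let V_w ∈ L²(ℝ) and define Bf(v) = ∫_ℝ (V_w(v − v′) − V_w(−v′))/v · f(v′) dv′ for v ≠ 0. Then for every f ∈ L²(ℝ), the high-velocity part satisfies ∫_{|v|>1} |Bf(v)|² dv ≤ 8 ‖V_w‖²_{L²(ℝ)} ‖f‖²_{L²(ℝ)}. -/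
open MeasureTheory Real

open scoped ENNReal NNReal Set

namespace Stmt2Aux

open Set

theorem sq_add_le (x y : ℝ≥0∞) : (x + y)^2 ≤ 2*x^2 + 2*y^2 := by
  rcases eq_or_ne x ⊤ with rfl | hx
  · rw [show (2:ℝ≥0∞)*⊤^2 + 2*y^2 = ⊤ by simp [ENNReal.top_pow]]; exact le_top
  rcases eq_or_ne y ⊤ with rfl | hy
  · rw [show (2:ℝ≥0∞)*x^2 + 2*⊤^2 = ⊤ by simp [ENNReal.top_pow]]; exact le_top
  lift x to NNReal using hx
  lift y to NNReal using hy
  rw [← ENNReal.coe_add, ← ENNReal.coe_pow, ← ENNReal.coe_pow, ← ENNReal.coe_pow]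
  norm_cast
  rw [← NNReal.coe_le_coe]
  push_cast
  nlinarith [sq_nonneg ((x:ℝ) - (y:ℝ))]

theorem key_bound (W g : ℝ → ℂ) (hW : Measurable W) (hg : Measurable g)
    (v : ℝ) (hv : 1 < |v|) :
    (‖Bop W g v‖₊ : ℝ≥0∞) ^ 2 ≤
      ENNReal.ofReal (v^2)⁻¹ *
        (4 * (∫⁻ u, (‖W u‖₊ : ℝ≥0∞)^2) * ∫⁻ u, (‖g u‖₊ : ℝ≥0∞)^2) := by
  set IV := ∫⁻ u, (‖W u‖₊ : ℝ≥0∞)^2 with hIV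
  set IF := ∫⁻ u, (‖g u‖₊ : ℝ≥0∞)^2 with hIF
  have hΔmeas : Measurable fun v' : ℝ => (‖W (v - v') - W (-v')‖₊ : ℝ≥0∞) :=
    ((hW.comp (measurable_const.sub measurable_id)).sub (hW.comp measurable_neg)).nnnorm.coe_nnreal_ennreal
  have hΔ : ∫⁻ v', (‖W (v - v') - W (-v')‖₊ : ℝ≥0∞)^2 ≤ 4 * IV := by
    have hle : ∀ v' : ℝ, (‖W (v - v') - W (-v')‖₊ : ℝ≥0∞)^2 ≤
        2*(‖W (v - v')‖₊ : ℝ≥0∞)^2 + 2*(‖W (-v')‖₊ : ℝ≥0∞)^2 := by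
      intro v'
      refine le_trans (pow_le_pow_left₀ zero_le ?_ 2) (sq_add_le _ _)
      exact_mod_cast nnnorm_sub_le _ _
    calc ∫⁻ v', (‖W (v - v') - W (-v')‖₊ : ℝ≥0∞)^2
        ≤ ∫⁻ v', (2*(‖W (v - v')‖₊ : ℝ≥0∞)^2 + 2*(‖W (-v')‖₊ : ℝ≥0∞)^2) :=
          lintegral_mono hle
      _ = 2 * (∫⁻ v', (‖W (v - v')‖₊ : ℝ≥0∞)^2) + 2 * ∫⁻ v', (‖W (-v')‖₊ : ℝ≥0∞)^2 := by
          have hm1 : Measurable fun v' : ℝ => (‖W (v - v')‖₊ : ℝ≥0∞)^2 :=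
            (hW.comp (measurable_const.sub measurable_id)).nnnorm.coe_nnreal_ennreal.pow_const 2
          have hm2 : Measurable fun v' : ℝ => (‖W (-v')‖₊ : ℝ≥0∞)^2 :=
            (hW.comp measurable_neg).nnnorm.coe_nnreal_ennreal.pow_const 2
          rw [lintegral_add_left (hm1.const_mul 2), lintegral_const_mul 2 hm1,
            lintegral_const_mul 2 hm2]
      _ = 2 * IV + 2 * IV := by
          rw [(Measure.measurePreserving_sub_left volume v).lintegral_comp (hW.nnnorm.coe_nnreal_ennreal.pow_const 2),
            (Measure.measurePreserving_neg volume).lintegral_comp (hW.nnnorm.coe_nnreal_ennreal.pow_const 2)]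
      _ = 4 * IV := by ring
  have hI : (‖∫ v', (W (v - v') - W (-v')) * g v'‖₊ : ℝ≥0∞)^2 ≤ 4 * IV * IF := by
    have hcs : ∫⁻ v', (‖W (v - v') - W (-v')‖₊ : ℝ≥0∞) * (‖g v'‖₊ : ℝ≥0∞) ≤
        (∫⁻ v', (‖W (v - v') - W (-v')‖₊ : ℝ≥0∞) ^ (2:ℝ)) ^ (1/2 : ℝ) *
        (∫⁻ v', (‖g v'‖₊ : ℝ≥0∞) ^ (2:ℝ)) ^ (1/2 : ℝ) :=
      ENNReal.lintegral_mul_le_Lp_mul_Lq volume Real.HolderConjugate.two_two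
        hΔmeas.aemeasurable hg.nnnorm.coe_nnreal_ennreal.aemeasurable
    have hrw : ∀ x : ℝ≥0∞, x ^ (2:ℝ) = x ^ (2:ℕ) := fun x => by
      rw [show (2:ℝ) = ((2:ℕ):ℝ) by norm_num, ENNReal.rpow_natCast]
    simp only [hrw] at hcs
    calc (‖∫ v', (W (v - v') - W (-v')) * g v'‖₊ : ℝ≥0∞)^2
        ≤ (∫⁻ v', (‖(W (v - v') - W (-v')) * g v'‖₊ : ℝ≥0∞))^2 :=
          pow_le_pow_left₀ zero_le (enorm_integral_le_lintegral_enorm _) 2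
      _ = (∫⁻ v', (‖W (v - v') - W (-v')‖₊ : ℝ≥0∞) * (‖g v'‖₊ : ℝ≥0∞))^2 := by
          simp only [nnnorm_mul, ENNReal.coe_mul]
      _ ≤ ((∫⁻ v', (‖W (v - v') - W (-v')‖₊ : ℝ≥0∞) ^ (2:ℕ)) ^ (1/2 : ℝ) *
           (∫⁻ v', (‖g v'‖₊ : ℝ≥0∞) ^ (2:ℕ)) ^ (1/2 : ℝ))^2 :=
          pow_le_pow_left₀ zero_le hcs 2
      _ ≤ ((4 * IV) ^ (1/2 : ℝ) * IF ^ (1/2 : ℝ))^2 := by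
          refine pow_le_pow_left₀ zero_le (mul_le_mul' ?_ ?_) 2
          · exact ENNReal.rpow_le_rpow hΔ (by norm_num)
          · exact le_of_eq (by rw [hIF])
      _ = 4 * IV * IF := by
          rw [mul_pow, ← ENNReal.rpow_natCast ((4*IV) ^ (1/2:ℝ)) 2,
            ← ENNReal.rpow_natCast (IF ^ (1/2:ℝ)) 2,
            ← ENNReal.rpow_mul, ← ENNReal.rpow_mul]
          norm_num
  have hv0 : v ≠ 0 := by intro h; rw [h] at hv; norm_num at hv
  have hBrw : Bop W g v = (∫ v', (W (v - v') - W (-v')) * g v') / (v:ℂ) := by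
    simp only [Bop, div_mul_eq_mul_div, integral_div]
  rw [hBrw]
  have hnn : (‖(∫ v', (W (v - v') - W (-v')) * g v') / (v:ℂ)‖₊ : ℝ≥0∞)^2 =
      ENNReal.ofReal (v^2)⁻¹ * (‖∫ v', (W (v - v') - W (-v')) * g v'‖₊ : ℝ≥0∞)^2 := by
    rw [← enorm_eq_nnnorm, ← ofReal_norm, ← enorm_eq_nnnorm, ← ofReal_norm, norm_div,
      Complex.norm_real, ← ENNReal.ofReal_pow (by positivity), ← ENNReal.ofReal_pow (by positivity),
      div_pow, Real.norm_eq_abs, sq_abs, div_eq_inv_mul, ENNReal.ofReal_mul (by positivity)]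
  rw [hnn]
  exact mul_le_mul_right hI _

theorem intOn : IntegrableOn (fun v : ℝ => (v^2)⁻¹) (Ioi 1) := by
  have := integrableOn_Ioi_rpow_of_lt (by norm_num : (-2:ℝ) < -1) one_pos
  refine this.congr_fun (fun x hx => ?_) measurableSet_Ioi
  have hx0 : (0:ℝ) < x := lt_trans one_pos hx
  dsimp only
  rw [rpow_neg hx0.le, show ((2:ℝ)) = ((2:ℕ):ℝ) by norm_num, rpow_natCast]

theorem lint_Ioi : ∫⁻ v in Ioi (1:ℝ), ENNReal.ofReal (v^2)⁻¹ = 1 := by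
  have intval : ∫ v in Ioi (1:ℝ), (v^2)⁻¹ = 1 := by
    rw [setIntegral_congr_fun measurableSet_Ioi (g := fun v : ℝ => v ^ (-2:ℝ))
      (fun x hx => ?_)]
    · rw [integral_Ioi_rpow_of_lt (by norm_num) one_pos]; norm_num
    · have hx0 : (0:ℝ) < x := lt_trans one_pos hx
      show (x^2)⁻¹ = x ^ (-2:ℝ)
      rw [rpow_neg hx0.le, show ((2:ℝ)) = ((2:ℕ):ℝ) by norm_num, rpow_natCast]
  rw [← ofReal_integral_eq_lintegral_ofReal intOn
      (ae_of_all _ fun x => by positivity), intval, ENNReal.ofReal_one]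

theorem lint_Iio : ∫⁻ v in Iio (-1:ℝ), ENNReal.ofReal (v^2)⁻¹ = 1 := by
  set h : ℝ → ℝ≥0∞ := fun v => ENNReal.ofReal (v^2)⁻¹ with hh
  have hmeas : Measurable h := by
    apply Measurable.ennreal_ofReal
    exact (measurable_id.pow_const 2).inv
  have h1 : ∀ x : ℝ, (Iio (-1:ℝ)).indicator h (-x) = (Ioi (1:ℝ)).indicator h x := by
    intro x
    by_cases hx : x ∈ Ioi (1:ℝ)
    · rw [indicator_of_mem hx, indicator_of_mem (by simpa [mem_Iio] using hx : -x ∈ Iio (-1:ℝ))]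
      simp [hh, neg_pow]
    · rw [indicator_of_notMem hx, indicator_of_notMem]
      simp only [mem_Iio, neg_lt_neg_iff, not_lt] at *
      simpa [mem_Ioi, not_lt] using hx
  calc ∫⁻ v in Iio (-1:ℝ), h v
      = ∫⁻ v, (Iio (-1:ℝ)).indicator h v := (lintegral_indicator measurableSet_Iio h).symm
    _ = ∫⁻ x, (Iio (-1:ℝ)).indicator h (-x) :=
        ((Measure.measurePreserving_neg (volume : Measure ℝ)).lintegral_comp
          (hmeas.indicator measurableSet_Iio)).symm
    _ = ∫⁻ x, (Ioi (1:ℝ)).indicator h x := lintegral_congr h1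
    _ = ∫⁻ v in Ioi (1:ℝ), h v := lintegral_indicator measurableSet_Ioi h
    _ = 1 := lint_Ioi

theorem set_eq : {v : ℝ | 1 < |v|} = Iio (-1) ∪ Ioi 1 := by
  ext v
  simp only [mem_setOf_eq, lt_abs, mem_union, mem_Iio, mem_Ioi, lt_neg]
  tauto

theorem lint_set : ∫⁻ v in {v : ℝ | 1 < |v|}, ENNReal.ofReal (v^2)⁻¹ = 2 := by
  rw [set_eq, lintegral_union measurableSet_Ioi (by
    simp only [Set.disjoint_left, mem_Iio, mem_Ioi]
    intro a ha; linarith), lint_Iio, lint_Ioi]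
  norm_num

end Stmt2Aux

open Stmt2Aux Set

/-- For `V_w ∈ L²(ℝ)` and every `f ∈ L²(ℝ)`, the
high-velocity part of the singularity-free operator satisfies
`∫_{|v|>1} |Bf(v)|² dv ≤ 8 ‖V_w‖₂² ‖f‖₂²`. -/
theorem stmt2 (Vw : ℝ → ℂ) (hVw : MemLp Vw 2 (volume : Measure ℝ))
    (f : ℝ → ℂ) (hf : MemLp f 2 (volume : Measure ℝ)) :
    ∫⁻ v in {v : ℝ | 1 < |v|}, (‖Bop Vw f v‖₊ : ENNReal) ^ 2 ≤
      ENNReal.ofReal (8 * (∫ u : ℝ, ‖Vw u‖ ^ 2) * ∫ u : ℝ, ‖f u‖ ^ 2) := by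
  obtain ⟨hVm, hV2⟩ := hVw
  obtain ⟨hfm, hf2⟩ := hf
  set W := hVm.mk Vw with hWdef
  have hW : Measurable W := hVm.stronglyMeasurable_mk.measurable
  have hVWae : Vw =ᵐ[volume] W := hVm.ae_eq_mk
  set g := hfm.mk f with hgdef
  have hg : Measurable g := hfm.stronglyMeasurable_mk.measurable
  have hfgae : f =ᵐ[volume] g := hfm.ae_eq_mk
  -- the operator agrees
  have hBeq : ∀ v : ℝ, Bop Vw f v = Bop W g v := by
    intro v
    apply integral_congr_ae
    have h1 : (fun v' : ℝ => Vw (v - v')) =ᵐ[volume] fun v' => W (v - v') :=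
      (Measure.measurePreserving_sub_left volume v).quasiMeasurePreserving.ae_eq_comp hVWae
    have h2 : (fun v' : ℝ => Vw (-v')) =ᵐ[volume] fun v' => W (-v') :=
      (Measure.measurePreserving_neg volume).quasiMeasurePreserving.ae_eq_comp hVWae
    filter_upwards [h1, h2, hfgae] with v' e1 e2 e3
    rw [e1, e2, e3]
  -- identify real integrals with lintegrals
  have hVint : Integrable (fun u => ‖Vw u‖ ^ 2) volume := by
    have := (MemLp.integrable_norm_rpow ⟨hVm, hV2⟩ two_ne_zero ENNReal.ofNat_ne_top)
    simpa [ENNReal.toReal_ofNat, Real.rpow_natCast] using this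
  have hfint : Integrable (fun u => ‖f u‖ ^ 2) volume := by
    have := (MemLp.integrable_norm_rpow ⟨hfm, hf2⟩ two_ne_zero ENNReal.ofNat_ne_top)
    simpa [ENNReal.toReal_ofNat, Real.rpow_natCast] using this
  have hVof : ENNReal.ofReal (∫ u : ℝ, ‖Vw u‖ ^ 2) = ∫⁻ u, (‖W u‖₊ : ℝ≥0∞)^2 := by
    rw [ofReal_integral_eq_lintegral_ofReal hVint (ae_of_all _ fun x => by positivity)]
    refine lintegral_congr_ae ?_
    filter_upwards [hVWae] with x hx
    rw [hx, ← enorm_eq_nnnorm, ← ofReal_norm, ← ENNReal.ofReal_pow (norm_nonneg _)]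
  have hfof : ENNReal.ofReal (∫ u : ℝ, ‖f u‖ ^ 2) = ∫⁻ u, (‖g u‖₊ : ℝ≥0∞)^2 := by
    rw [ofReal_integral_eq_lintegral_ofReal hfint (ae_of_all _ fun x => by positivity)]
    refine lintegral_congr_ae ?_
    filter_upwards [hfgae] with x hx
    rw [hx, ← enorm_eq_nnnorm, ← ofReal_norm, ← ENNReal.ofReal_pow (norm_nonneg _)]
  set IV := ∫⁻ u, (‖W u‖₊ : ℝ≥0∞)^2 with hIV
  set IF := ∫⁻ u, (‖g u‖₊ : ℝ≥0∞)^2 with hIF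
  have hmono : ∫⁻ v in {v : ℝ | 1 < |v|}, (‖Bop Vw f v‖₊ : ℝ≥0∞) ^ 2 ≤
      ∫⁻ v in {v : ℝ | 1 < |v|}, ENNReal.ofReal (v^2)⁻¹ * (4 * IV * IF) := by
    refine setLIntegral_mono (by
      apply Measurable.mul _ measurable_const
      exact Measurable.ennreal_ofReal ((measurable_id.pow_const 2).inv)) ?_
    intro v hv
    rw [hBeq v]
    exact key_bound W g hW hg v hv
  calc ∫⁻ v in {v : ℝ | 1 < |v|}, (‖Bop Vw f v‖₊ : ℝ≥0∞) ^ 2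
      ≤ ∫⁻ v in {v : ℝ | 1 < |v|}, ENNReal.ofReal (v^2)⁻¹ * (4 * IV * IF) := hmono
    _ = (∫⁻ v in {v : ℝ | 1 < |v|}, ENNReal.ofReal (v^2)⁻¹) * (4 * IV * IF) :=
        lintegral_mul_const _ (Measurable.ennreal_ofReal ((measurable_id.pow_const 2).inv))
    _ = 2 * (4 * IV * IF) := by rw [lint_set]
    _ = 8 * IV * IF := by ring
    _ = ENNReal.ofReal (8 * (∫ u : ℝ, ‖Vw u‖ ^ 2) * ∫ u : ℝ, ‖f u‖ ^ 2) := by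
        rw [ENNReal.ofReal_mul (by positivity), ENNReal.ofReal_mul (by norm_num),
          hVof, hfof, ENNReal.ofReal_ofNat]
end

section
/- Let V : ℝ → ℝ be essentially bounded, fix x ∈ ℝ and h > 0, and set R^h = 1/(2h), v_n = (2n+1)πh for n ∈ ℤ. Define the infinite matrix M by M_{nm} = (i/2π)∫_{−R^h}^{R^h} D_V(y) e^{i(v_n − v_m)y} dy and the discrete operator Θ_d on ℓ²(ℤ) by (Θ_d g)_n = 2πh·Σ_{m∈ℤ} M_{nm} g_m. Then Θ_d is a bounded linear operator on ℓ²(ℤ) with ‖Θ_d g‖_{ℓ²(ℤ)} ≤ 2‖V‖_∞ ‖g‖_{ℓ²(ℤ)} for all g ∈ ℓ²(ℤ), uniformly in h. -/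
open MeasureTheory Real
open scoped ENNReal ComplexConjugate

/-- Velocity grid point `v_n = (2n+1)πh`. -/
noncomputable def vpt (h : ℝ) (n : ℤ) : ℝ := (2 * (n : ℝ) + 1) * π * h

/-- The matrix entry
`M_{nm} = (i/2π) ∫_{−Rʰ}^{Rʰ} D_V(y) e^{i(v_n−v_m)y} dy` with `Rʰ = 1/(2h)`. -/
noncomputable def Mmat (V : ℝ → ℝ) (x h : ℝ) (n m : ℤ) : ℂ :=
  Complex.I / (2 * π) *
    ∫ y in Set.Icc (-(1 / (2 * h))) (1 / (2 * h)),
      ((V (x + y / 2) - V (x - y / 2) : ℝ) : ℂ) *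
        Complex.exp (Complex.I * ((vpt h n - vpt h m : ℝ) : ℂ) * (y : ℂ))

/-- The discrete pseudo-differential operator
`(Θ_d g)_n = 2πh Σ_m M_{nm} g_m` on `ℓ²(ℤ)`. -/
noncomputable def Θd (V : ℝ → ℝ) (x h : ℝ) (g : ℤ → ℂ) (n : ℤ) : ℂ :=
  (2 * π * h : ℝ) * ∑' m : ℤ, Mmat V x h n m * g m

/- ### Auxiliary lemmas -/

private lemma qmp_affine (c b : ℝ) (hc : c ≠ 0) :
    Measure.QuasiMeasurePreserving (fun y : ℝ => c * y + b) volume volume := by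
  have h1 : Measure.QuasiMeasurePreserving (fun y : ℝ => c * y) volume volume := by
    refine ⟨measurable_const_mul c, ?_⟩
    rw [Real.map_volume_mul_left hc]
    refine Measure.AbsolutelyContinuous.mk fun s _ hs => ?_
    simp [Measure.smul_apply, hs]
  have h2 : Measure.QuasiMeasurePreserving (fun y : ℝ => b + y) volume volume :=
    (measurePreserving_add_left volume b).quasiMeasurePreserving
  have h3 := h2.comp h1
  have heq : ((fun y : ℝ => b + y) ∘ fun y : ℝ => c * y) = fun y : ℝ => c * y + b := by
    funext y; simp [Function.comp]; ring
  rwa [heq] at h3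

private lemma memℓp_neg_comp {f : ℤ → ℂ} (hf : Memℓp f 2) :
    Memℓp (fun k : ℤ => f (-k)) 2 := by
  have h2 : (0 : ℝ) < (2 : ℝ≥0∞).toReal := by norm_num
  rw [memℓp_gen_iff h2] at hf ⊢
  simpa [Function.comp_def] using ((Equiv.neg ℤ).summable_iff
    (f := fun i => ‖f i‖ ^ (2 : ℝ≥0∞).toReal)).2 hf

private lemma sqrt_tsum_eq_norm (v : lp (fun _ : ℤ => ℂ) 2) :
    Real.sqrt (∑' k : ℤ, ‖v k‖ ^ 2) = ‖v‖ := by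
  rw [lp.norm_eq_tsum_rpow (by norm_num) v]
  have h2 : (2 : ℝ≥0∞).toReal = (2 : ℝ) := by norm_num
  rw [h2, Real.sqrt_eq_rpow]
  congr 1
  refine tsum_congr fun k => ?_
  rw [← Real.rpow_natCast (‖v k‖) 2]
  norm_num

private theorem stmt8_meas (V : ℝ → ℝ) (hVm : Measurable V)
    (hV : MemLp V ⊤ (volume : Measure ℝ))
    (x h : ℝ) (hh : 0 < h) (g : ℤ → ℂ) (hg : Memℓp g 2) :
    Memℓp (Θd V x h g) 2 ∧
      Real.sqrt (∑' n : ℤ, ‖Θd V x h g n‖ ^ 2) ≤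
        2 * (eLpNorm V ⊤ (volume : Measure ℝ)).toReal *
          Real.sqrt (∑' m : ℤ, ‖g m‖ ^ 2) := by
  have hπ : (0 : ℝ) < π := Real.pi_pos
  set T : ℝ := 1 / h with hT
  haveI : Fact (0 < T) := ⟨by positivity⟩
  set a : ℝ := -(1 / (2 * h)) with ha
  have haT : a + T = 1 / (2 * h) := by rw [ha, hT]; field_simp; ring
  have haT' : a < a + T := by
    have h0 : (0:ℝ) < 1 / (2 * h) := by positivity
    rw [haT, ha]; linarith
  set CV : ℝ := (eLpNorm V ⊤ (volume : Measure ℝ)).toReal with hCV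
  have hCV0 : (0:ℝ) ≤ CV := ENNReal.toReal_nonneg
  -- a.e. bound on V
  have hVbd : ∀ᵐ t : ℝ ∂volume, |V t| ≤ CV := by
    have h1 : eLpNormEssSup V (volume : Measure ℝ) ≠ ⊤ := by
      have := hV.2; rw [eLpNorm_exponent_top] at this; exact this.ne
    filter_upwards [ae_le_eLpNormEssSup (f := V) (μ := (volume : Measure ℝ))] with t ht
    have h2 := ENNReal.toReal_mono h1 ht
    simpa [hCV, eLpNorm_exponent_top, Real.norm_eq_abs] using h2
  set f₀ : ℝ → ℂ := fun y => Complex.I * (((V (x + y / 2) - V (x - y / 2) : ℝ)) : ℂ) with hf₀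
  have hq1 : Measure.QuasiMeasurePreserving (fun y : ℝ => x + y / 2) volume volume := by
    have h1 := qmp_affine (1/2) x (by norm_num)
    have heq : (fun y : ℝ => 1/2 * y + x) = fun y : ℝ => x + y / 2 := by funext y; ring
    rwa [heq] at h1
  have hq2 : Measure.QuasiMeasurePreserving (fun y : ℝ => x - y / 2) volume volume := by
    have h1 := qmp_affine (-(1/2)) x (by norm_num)
    have heq : (fun y : ℝ => -(1/2) * y + x) = fun y : ℝ => x - y / 2 := by funext y; ring
    rwa [heq] at h1
  have hbd₀ : ∀ᵐ y : ℝ ∂volume, ‖f₀ y‖ ≤ 2 * CV := by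
    filter_upwards [hq1.ae hVbd, hq2.ae hVbd] with y h1 h2
    simp only [hf₀, norm_mul, Complex.norm_I, one_mul, Complex.norm_real, Real.norm_eq_abs]
    calc |V (x + y / 2) - V (x - y / 2)| ≤ |V (x + y / 2)| + |V (x - y / 2)| := abs_sub _ _
      _ ≤ CV + CV := add_le_add h1 h2
      _ = 2 * CV := by ring
  set F : AddCircle T → ℂ := AddCircle.liftIoc T a f₀ with hF
  have hf₀m : Measurable f₀ := by
    apply Measurable.const_mul
    apply Complex.measurable_ofReal.comp
    exact (hVm.comp (by fun_prop)).sub (hVm.comp (by fun_prop))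
  have hFm : Measurable F :=
    (hf₀m.comp measurable_subtype_coe).comp (AddCircle.measurableEquivIoc T a).measurable
  -- a.e. bound for F with respect to haarAddCircle
  have hac : (AddCircle.haarAddCircle : Measure (AddCircle T)) ≪
      (volume : Measure (AddCircle T)) := by
    refine Measure.AbsolutelyContinuous.mk fun s hs h0 => ?_
    rw [AddCircle.volume_eq_smul_haarAddCircle, Measure.smul_apply, smul_eq_mul] at h0
    rcases mul_eq_zero.mp h0 with h' | h'
    · exact absurd h' (by simp [(Fact.out : (0:ℝ) < T)])
    · exact h'
  have hFbd : ∀ᵐ z ∂(AddCircle.haarAddCircle : Measure (AddCircle T)), ‖F z‖ ≤ 2 * CV := by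
    have hvol : ∀ᵐ z ∂(volume : Measure (AddCircle T)), ‖F z‖ ≤ 2 * CV := by
      rw [← (AddCircle.measurePreserving_mk T a).map_eq]
      rw [MeasureTheory.ae_map_iff (AddCircle.measurable_mk'.aemeasurable)
        (measurableSet_le hFm.norm measurable_const)]
      filter_upwards [ae_restrict_of_ae hbd₀, ae_restrict_mem measurableSet_Ioc] with y h1 h2
      rw [show ((y : AddCircle T)) = ((y : ℝ) : AddCircle T) from rfl]
      rw [hF, AddCircle.liftIoc_coe_apply h2]
      exact h1
    exact hvol.filter_mono hac.ae_le
  -- the ℓ² element of reversed g and its L² counterpart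
  have hgR : Memℓp (fun k : ℤ => g (-k)) 2 := memℓp_neg_comp hg
  set gR : lp (fun _ : ℤ => ℂ) 2 := ⟨fun k => g (-k), hgR⟩ with hgdef
  set B := fourierBasis (T := T) with hB
  set G : Lp ℂ 2 (AddCircle.haarAddCircle : Measure (AddCircle T)) := B.repr.symm gR with hGdef
  have hGmem : MemLp (G : AddCircle T → ℂ) 2 AddCircle.haarAddCircle := Lp.memLp G
  have hPrebd : ∀ᵐ t ∂(AddCircle.haarAddCircle : Measure (AddCircle T)),
      ‖F t * (G : AddCircle T → ℂ) t‖ ≤ (2 * CV) * ‖(G : AddCircle T → ℂ) t‖ := by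
    filter_upwards [hFbd] with t ht
    rw [norm_mul]
    exact mul_le_mul_of_nonneg_right ht (norm_nonneg _)
  have hPmem : MemLp (fun t => F t * (G : AddCircle T → ℂ) t) 2 AddCircle.haarAddCircle :=
    MemLp.of_le_mul hGmem (hFm.aestronglyMeasurable.mul (Lp.aestronglyMeasurable G)) hPrebd
  set P : Lp ℂ 2 (AddCircle.haarAddCircle : Measure (AddCircle T)) := hPmem.toLp _ with hPdef
  -- the key Fourier-coefficient identity
  have hh' : (h : ℂ) ≠ 0 := by exact_mod_cast hh.ne'
  have hπ' : (π : ℂ) ≠ 0 := by exact_mod_cast hπ.ne'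
  have hM : ∀ n m : ℤ, ((2 * π * h : ℝ) : ℂ) * Mmat V x h n m = fourierCoeff F (m - n) := by
    intro n m
    rw [fourierCoeff_eq_intervalIntegral F (m - n) a, intervalIntegral.integral_of_le haT'.le]
    have hinteg : Set.EqOn
        (fun y : ℝ => (fourier (-(m - n)) (y : AddCircle T)) • F (y : AddCircle T))
        (fun y : ℝ => Complex.I * ((((V (x + y / 2) - V (x - y / 2) : ℝ)) : ℂ) *
          Complex.exp (Complex.I * (((vpt h n - vpt h m : ℝ)) : ℂ) * (y : ℂ))))
        (Set.Ioc a (a + T)) := by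
      intro y hy
      simp only
      rw [hF, AddCircle.liftIoc_coe_apply hy, smul_eq_mul, fourier_coe_apply, hf₀]
      have hexp : 2 * π * Complex.I * ((-(m - n) : ℤ) : ℂ) * (y : ℂ) / ((T : ℝ) : ℂ)
          = Complex.I * (((vpt h n - vpt h m : ℝ)) : ℂ) * (y : ℂ) := by
        simp only [vpt, hT]
        push_cast
        field_simp
        ring
      rw [hexp]
      ring
    rw [setIntegral_congr_fun measurableSet_Ioc hinteg]
    rw [MeasureTheory.integral_const_mul]
    rw [Mmat, show Set.Icc (-(1 / (2 * h))) (1 / (2 * h)) = Set.Icc a (a + T) by rw [haT, ha]]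
    rw [MeasureTheory.integral_Icc_eq_integral_Ioc]
    rw [Complex.real_smul, hT]
    push_cast
    field_simp
  -- the key identity for Θd
  have hkey : ∀ n : ℤ, Θd V x h g n = B.repr P (-n) := by
    intro n
    set wf : AddCircle T → ℂ := fun t => (starRingEnd ℂ) (fourier n t * F t) with hwf
    have hwfm : AEStronglyMeasurable wf AddCircle.haarAddCircle :=
      (Complex.continuous_conj.measurable.comp ((map_continuous (fourier n)).measurable.mul hFm)).aestronglyMeasurable
    have hfn : ∀ t : AddCircle T, ‖fourier n t‖ = 1 := fun t => by
      rw [fourier_apply, Circle.norm_coe]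
    have hwfbd : ∀ᵐ t ∂(AddCircle.haarAddCircle : Measure (AddCircle T)), ‖wf t‖ ≤ 2 * CV := by
      filter_upwards [hFbd] with t ht
      calc ‖wf t‖ = ‖fourier n t * F t‖ := RCLike.norm_conj _
        _ = ‖fourier n t‖ * ‖F t‖ := norm_mul _ _
        _ = ‖F t‖ := by rw [hfn, one_mul]
        _ ≤ 2 * CV := ht
    have hwf2 : MemLp wf 2 AddCircle.haarAddCircle := MemLp.of_bound hwfm (2 * CV) hwfbd
    set w : Lp ℂ 2 (AddCircle.haarAddCircle : Measure (AddCircle T)) := hwf2.toLp wf with hwdef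
    have hreprG : ∀ k : ℤ, B.repr G k = g (-k) := by
      intro k
      rw [hGdef, LinearIsometryEquiv.apply_symm_apply]
    have hsum := B.hasSum_repr G
    have hs2 := (innerSL ℂ w).hasSum hsum
    have hinner : ∀ k : ℤ,
        (inner ℂ w ((B k : Lp ℂ 2 (AddCircle.haarAddCircle : Measure (AddCircle T)))) : ℂ) =
          fourierCoeff F (-(n + k)) := by
      intro k
      rw [MeasureTheory.L2.inner_def, fourierCoeff]
      refine integral_congr_ae ?_
      have hBk : ((B k : Lp ℂ 2 (AddCircle.haarAddCircle : Measure (AddCircle T))) :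
          AddCircle T → ℂ) =ᵐ[(AddCircle.haarAddCircle : Measure (AddCircle T))] fourier k := by
        rw [hB, coe_fourierBasis]; exact coeFn_fourierLp 2 k
      filter_upwards [hwf2.coeFn_toLp, hBk] with t h1 h2
      rw [RCLike.inner_apply, h1, h2, hwf]
      simp only [RingHomCompTriple.comp_apply, RingHom.id_apply, RCLike.conj_conj, neg_neg,
        smul_eq_mul, fourier_add, Complex.conj_conj]
      ring
    have hterm : ∀ k : ℤ, (innerSL ℂ w) ((B.repr G k) • (B k)) =
        g (-k) * fourierCoeff F (-(n + k)) := by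
      intro k
      rw [innerSL_apply_apply, inner_smul_right, hreprG, hinner]
    have hval : (innerSL ℂ w) G = B.repr P (-n) := by
      rw [innerSL_apply_apply, MeasureTheory.L2.inner_def, hB, fourierBasis_repr, fourierCoeff]
      refine integral_congr_ae ?_
      filter_upwards [hwf2.coeFn_toLp, hPmem.coeFn_toLp] with t h1 h2
      rw [RCLike.inner_apply, h1, h2, hwf]
      simp only [neg_neg, smul_eq_mul, Complex.conj_conj]
      ring
    have hs3 : HasSum (fun k : ℤ => g (-k) * fourierCoeff F (-(n + k))) (B.repr P (-n)) := by
      rw [← hval]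
      have heq : (fun k : ℤ => (innerSL ℂ w) ((B.repr G k) • (B k))) =
          fun k : ℤ => g (-k) * fourierCoeff F (-(n + k)) := funext hterm
      rwa [heq] at hs2
    have hs4 : HasSum (fun m : ℤ => g m * fourierCoeff F (m - n)) (B.repr P (-n)) := by
      have h5 := ((Equiv.neg ℤ).hasSum_iff).2 hs3
      have heq : ((fun k : ℤ => g (-k) * fourierCoeff F (-(n + k))) ∘ (Equiv.neg ℤ)) =
          fun m : ℤ => g m * fourierCoeff F (m - n) := by
        funext m
        simp only [Function.comp, Equiv.neg_apply, neg_neg]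
        congr 2
        ring
      rwa [heq] at h5
    rw [Θd, ← tsum_mul_left, ← hs4.tsum_eq]
    refine tsum_congr fun m => ?_
    rw [← mul_assoc, hM n m]
    ring
  have hΘ : Θd V x h g = fun n => B.repr P (-n) := funext hkey
  have hmem : Memℓp (Θd V x h g) 2 := by
    rw [hΘ]
    exact memℓp_neg_comp (lp.memℓp (B.repr P))
  refine ⟨hmem, ?_⟩
  have h1 : ∑' n : ℤ, ‖Θd V x h g n‖ ^ 2 = ∑' k : ℤ, ‖B.repr P k‖ ^ 2 := by
    simp only [hkey]
    exact (Equiv.neg ℤ).tsum_eq (fun k => ‖B.repr P k‖ ^ 2)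
  have h2 : ∑' m : ℤ, ‖g m‖ ^ 2 = ∑' k : ℤ, ‖gR k‖ ^ 2 :=
    ((Equiv.neg ℤ).tsum_eq (fun m => ‖g m‖ ^ 2)).symm
  rw [h1, h2, sqrt_tsum_eq_norm (B.repr P), sqrt_tsum_eq_norm gR, LinearIsometryEquiv.norm_map]
  have hGnorm : ‖G‖ = ‖gR‖ := by rw [hGdef, LinearIsometryEquiv.norm_map]
  have hPnorm : ‖P‖ ≤ 2 * CV * ‖G‖ := by
    rw [hPdef, Lp.norm_toLp, Lp.norm_def]
    have hle := MeasureTheory.eLpNorm_le_mul_eLpNorm_of_ae_le_mul hPrebd 2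
    have hne : ENNReal.ofReal (2 * CV) *
        eLpNorm ((G : Lp ℂ 2 (AddCircle.haarAddCircle : Measure (AddCircle T))) :
          AddCircle T → ℂ) 2 AddCircle.haarAddCircle ≠ ⊤ :=
      ENNReal.mul_ne_top ENNReal.ofReal_ne_top (Lp.eLpNorm_ne_top G)
    have hmono := ENNReal.toReal_mono hne hle
    rw [ENNReal.toReal_mul, ENNReal.toReal_ofReal (by linarith : (0:ℝ) ≤ 2 * CV)] at hmono
    exact hmono
  calc ‖P‖ ≤ 2 * CV * ‖G‖ := hPnorm
    _ = 2 * CV * ‖gR‖ := by rw [hGnorm]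

/-- For essentially bounded `V`, fixed `x` and `h > 0`, the
discrete operator `Θ_d` is bounded on `ℓ²(ℤ)` with
`‖Θ_d g‖_{ℓ²} ≤ 2 ‖V‖_∞ ‖g‖_{ℓ²}`, uniformly in `h`. -/
theorem stmt8 (V : ℝ → ℝ) (hV : MemLp V ⊤ (volume : Measure ℝ))
    (x h : ℝ) (hh : 0 < h) (g : ℤ → ℂ) (hg : Memℓp g 2) :
    Memℓp (Θd V x h g) 2 ∧
      Real.sqrt (∑' n : ℤ, ‖Θd V x h g n‖ ^ 2) ≤
        2 * (eLpNorm V ⊤ (volume : Measure ℝ)).toReal *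
          Real.sqrt (∑' m : ℤ, ‖g m‖ ^ 2) := by
  have hsm := hV.aestronglyMeasurable
  set V' : ℝ → ℝ := hsm.mk V with hV'def
  have hV'm : Measurable V' := hsm.stronglyMeasurable_mk.measurable
  have hae : V =ᵐ[volume] V' := hsm.ae_eq_mk
  have hV' : MemLp V' ⊤ (volume : Measure ℝ) := hV.ae_eq hae
  have hq1 : Measure.QuasiMeasurePreserving (fun y : ℝ => x + y / 2) volume volume := by
    have h1 := qmp_affine (1/2) x (by norm_num)
    have heq : (fun y : ℝ => 1/2 * y + x) = fun y : ℝ => x + y / 2 := by funext y; ring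
    rwa [heq] at h1
  have hq2 : Measure.QuasiMeasurePreserving (fun y : ℝ => x - y / 2) volume volume := by
    have h1 := qmp_affine (-(1/2)) x (by norm_num)
    have heq : (fun y : ℝ => -(1/2) * y + x) = fun y : ℝ => x - y / 2 := by funext y; ring
    rwa [heq] at h1
  have hMeq : ∀ n m : ℤ, Mmat V x h n m = Mmat V' x h n m := by
    intro n m
    rw [Mmat, Mmat]
    congr 1
    apply integral_congr_ae
    apply ae_restrict_of_ae
    filter_upwards [hq1.ae_eq hae, hq2.ae_eq hae] with y h1 h2
    simp only [Function.comp] at h1 h2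
    rw [h1, h2]
  have hΘeq : Θd V x h g = Θd V' x h g := by
    funext n
    rw [Θd, Θd]
    congr 1
    exact tsum_congr fun m => by rw [hMeq n m]
  have heL : eLpNorm V ⊤ (volume : Measure ℝ) = eLpNorm V' ⊤ (volume : Measure ℝ) :=
    eLpNorm_congr_ae hae
  rw [hΘeq, heL]
  exact stmt8_meas V' hV'm hV' x h hh g hg
end

section
/- Let V : ℝ → ℝ be bounded measurable, fix x ∈ ℝ and h > 0, and set v_n = (2n+1)πh. For the discrete singularity-free operator (B_d g)_n = i h Σ_{m∈ℤ} g_m ∫_{−1/(2h)}^{1/(2h)} D_V(y)·(e^{i(v_n − v_m)y} − e^{−i v_m y})/v_n dy, one has for every g ∈ ℓ²(ℤ) and every n ∈ ℤ the pointwise bound |(B_d g)_n| ≤ (h·∫_{−1/(2h)}^{1/(2h)} y²|D_V(y)|² dy)^{1/2} · ‖g‖_{ℓ²(ℤ)}. -/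
open MeasureTheory Real
open scoped ENNReal

/-- The discrete singularity-free Wigner operator
`(B_d g)_n = i h Σ_m g_m ∫_{−1/(2h)}^{1/(2h)} D_V(y)
  (e^{i(v_n−v_m)y} − e^{−i v_m y})/v_n dy`. -/
noncomputable def Bd (V : ℝ → ℝ) (x h : ℝ) (g : ℤ → ℂ) (n : ℤ) : ℂ :=
  Complex.I * (h : ℂ) *
    ∑' m : ℤ, g m *
      ∫ y in Set.Icc (-(1 / (2 * h))) (1 / (2 * h)),
        ((V (x + y / 2) - V (x - y / 2) : ℝ) : ℂ) *
          (Complex.exp (Complex.I * ((vpt h n - vpt h m : ℝ) : ℂ) * (y : ℂ)) -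
            Complex.exp (-(Complex.I * ((vpt h m : ℝ) : ℂ) * (y : ℂ)))) /
          ((vpt h n : ℝ) : ℂ)

section Aux

lemma norm_exp_I_mul_sub_one_le (θ : ℝ) :
    ‖Complex.exp (Complex.I * θ) - 1‖ ≤ |θ| := by
  have h : Complex.I * (θ : ℂ) = (θ : ℂ) * Complex.I := by ring
  rw [h, Complex.exp_mul_I]
  have h2 : Complex.cos θ + Complex.sin θ * Complex.I - 1 =
      Complex.ofReal (Real.cos θ - 1) + Complex.ofReal (Real.sin θ) * Complex.I := by
    push_cast; ring
  rw [h2]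
  have h3 : ‖Complex.ofReal (Real.cos θ - 1) + Complex.ofReal (Real.sin θ) * Complex.I‖ =
      Real.sqrt ((Real.cos θ - 1) ^ 2 + Real.sin θ ^ 2) := by
    rw [Complex.norm_def, Complex.normSq_add_mul_I]
  rw [h3]
  have hcos : Real.cos θ = 1 - 2 * Real.sin (θ / 2) ^ 2 := by
    have h4 := Real.cos_two_mul (θ / 2)
    have h5 := Real.sin_sq_add_cos_sq (θ / 2)
    rw [show 2 * (θ / 2) = θ by ring] at h4
    nlinarith
  have hsin := Real.sin_sq_le_sq (x := θ / 2)
  calc Real.sqrt ((Real.cos θ - 1) ^ 2 + Real.sin θ ^ 2) ≤ Real.sqrt (θ ^ 2) := by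
        apply Real.sqrt_le_sqrt
        nlinarith [Real.sin_sq_add_cos_sq θ]
    _ = |θ| := Real.sqrt_sq_eq_abs θ

lemma intExpIcc (h : ℝ) (hh : 0 < h) (j : ℤ) :
    ∫ y in Set.Icc (-(1 / (2 * h))) (1 / (2 * h)),
        Complex.exp (Complex.I * ((2 * π * h * j : ℝ) : ℂ) * y) =
      if j = 0 then ((1 / h : ℝ) : ℂ) else 0 := by
  set L : ℝ := 1 / (2 * h) with hL
  have hLpos : 0 < L := by positivity
  by_cases hj : j = 0
  · subst hj
    simp only [Int.cast_zero, mul_zero, Complex.ofReal_zero, zero_mul, mul_zero,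
      Complex.exp_zero, if_pos rfl]
    rw [setIntegral_const]
    rw [measureReal_def, Real.volume_Icc]
    rw [show L - -L = 1 / h by have hne : h ≠ 0 := ne_of_gt hh; rw [hL]; field_simp; norm_num]
    rw [ENNReal.toReal_ofReal (by positivity)]
    simp [Complex.real_smul]
  · rw [if_neg hj]
    set c : ℂ := Complex.I * ((2 * π * h * j : ℝ) : ℂ) with hc
    have ha : (2 * π * h * (j : ℝ)) ≠ 0 := by
      have hπ := Real.pi_pos
      have hj' : (j : ℝ) ≠ 0 := Int.cast_ne_zero.2 hj
      positivity
    have hcne : c ≠ 0 := mul_ne_zero Complex.I_ne_zero (by exact_mod_cast ha)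
    have heq : ∀ y : ℝ, Complex.exp (c * y) = Complex.exp (Complex.I * ((2 * π * h * j : ℝ) : ℂ) * y) := fun y => rfl
    rw [integral_Icc_eq_integral_Ioc, ← intervalIntegral.integral_of_le (by linarith : -L ≤ L)]
    rw [integral_exp_mul_complex hcne]
    have hne : (h : ℂ) ≠ 0 := by exact_mod_cast ne_of_gt hh
    have key : c * ((L : ℝ) : ℂ) - c * (-((L : ℝ) : ℂ)) = (j : ℂ) * (2 * (π : ℂ) * Complex.I) := by
      rw [hc, hL]
      push_cast
      field_simp
      ring
    rw [div_eq_zero_iff]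
    left
    rw [sub_eq_zero, Complex.ofReal_neg]
    rw [show c * ((L : ℝ) : ℂ) = c * -((L : ℝ) : ℂ) + (j : ℂ) * (2 * (π : ℂ) * Complex.I) by
      linear_combination key]
    rw [Complex.exp_add, Complex.exp_int_mul_two_pi_mul_I, mul_one]

lemma tsum_mul_le_sqrt (a b : ℤ → ℝ) (ha : ∀ m, 0 ≤ a m) (hb : ∀ m, 0 ≤ b m)
    (hA : Summable fun m => a m ^ 2) (hB : Summable fun m => b m ^ 2) :
    ∑' m, a m * b m ≤ Real.sqrt (∑' m, a m ^ 2) * Real.sqrt (∑' m, b m ^ 2) := by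
  have hsum : Summable fun m => a m * b m := by
    apply Summable.of_nonneg_of_le (fun m => mul_nonneg (ha m) (hb m))
      (fun m => ?_) ((hA.add hB).div_const 2)
    · nlinarith [sq_nonneg (a m - b m)]
  apply Summable.tsum_le_of_sum_le hsum
  intro s
  calc ∑ m ∈ s, a m * b m ≤ Real.sqrt ((∑ m ∈ s, a m ^ 2) * (∑ m ∈ s, b m ^ 2)) := by
        rw [Real.le_sqrt (Finset.sum_nonneg fun m _ => mul_nonneg (ha m) (hb m)) (by positivity)]
        exact Finset.sum_mul_sq_le_sq_mul_sq s a b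
    _ ≤ Real.sqrt ((∑' m, a m ^ 2) * (∑' m, b m ^ 2)) := by
        apply Real.sqrt_le_sqrt
        apply mul_le_mul (Summable.sum_le_tsum s (fun m _ => sq_nonneg _) hA)
          (Summable.sum_le_tsum s (fun m _ => sq_nonneg _) hB)
          (Finset.sum_nonneg fun m _ => sq_nonneg _) (tsum_nonneg fun m => sq_nonneg _)
    _ = Real.sqrt (∑' m, a m ^ 2) * Real.sqrt (∑' m, b m ^ 2) :=
        Real.sqrt_mul (tsum_nonneg fun m => sq_nonneg _) _

end Aux

local notation "⟪" x ", " y "⟫" => @inner ℂ _ _ x y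

/-- Pointwise low-velocity bound for the discrete
singularity-free operator:
`|(B_d g)_n| ≤ (h ∫_{−1/(2h)}^{1/(2h)} y²|D_V(y)|² dy)^{1/2} ‖g‖_{ℓ²}`. -/
theorem stmt11 (V : ℝ → ℝ) (hVm : Measurable V) (hVb : ∃ c : ℝ, ∀ t : ℝ, |V t| ≤ c)
    (x h : ℝ) (hh : 0 < h) (g : ℤ → ℂ) (hg : Memℓp g 2) (n : ℤ) :
    ‖Bd V x h g n‖ ≤
      Real.sqrt (h * ∫ y in Set.Icc (-(1 / (2 * h))) (1 / (2 * h)),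
          y ^ 2 * (V (x + y / 2) - V (x - y / 2)) ^ 2) *
        Real.sqrt (∑' m : ℤ, ‖g m‖ ^ 2) := by
  obtain ⟨cV, hcV⟩ := hVb
  set L : ℝ := 1 / (2 * h) with hLdef
  have hLpos : 0 < L := by positivity
  set S : Set ℝ := Set.Icc (-L) L with hSdef
  set μ : Measure ℝ := volume.restrict S with hμdef
  haveI : IsFiniteMeasure μ := by
    constructor
    rw [hμdef, Measure.restrict_apply_univ, hSdef, Real.volume_Icc]
    exact ENNReal.ofReal_lt_top
  set D : ℝ → ℝ := fun y => V (x + y / 2) - V (x - y / 2) with hDdef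
  have hDm : Measurable D := by
    apply Measurable.sub
    · exact hVm.comp (measurable_const.add (measurable_id.div_const 2))
    · exact hVm.comp (measurable_const.sub (measurable_id.div_const 2))
  have hDb : ∀ y, |D y| ≤ 2 * cV := by
    intro y
    calc |D y| ≤ |V (x + y / 2)| + |V (x - y / 2)| := abs_sub _ _
      _ ≤ cV + cV := add_le_add (hcV _) (hcV _)
      _ = 2 * cV := by ring
  set vn : ℝ := vpt h n with hvndef
  have hvn : vn ≠ 0 := by
    have h1 : (2 * (n : ℝ) + 1) ≠ 0 := by
      intro hcon
      have : ((2 * n + 1 : ℤ) : ℝ) = 0 := by push_cast; linarith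
      have : (2 * n + 1 : ℤ) = 0 := by exact_mod_cast this
      omega
    exact mul_ne_zero (mul_ne_zero h1 Real.pi_ne_zero) (ne_of_gt hh)
  set F : ℝ → ℂ := fun y => ((D y : ℝ) : ℂ) * (Complex.exp (Complex.I * (vn : ℂ) * (y : ℂ)) - 1) / ((vn : ℝ) : ℂ) with hFdef
  set c : ℤ → ℂ := fun m => ∫ y, F y * Complex.exp (-(Complex.I * ((vpt h m : ℝ) : ℂ) * (y : ℂ))) ∂μ with hcdef
  -- Step 1 : rewrite Bd
  have hBd : Bd V x h g n = Complex.I * (h : ℂ) * ∑' m, g m * c m := by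
    rw [Bd]
    congr 1
    apply tsum_congr
    intro m
    congr 1
    rw [hcdef]
    have hSS : Set.Icc (-(1 / (2 * h))) (1 / (2 * h)) = S := by rw [hSdef, hLdef]
    rw [hSS]
    refine integral_congr_ae (Filter.Eventually.of_forall fun y => ?_)
    have he : Complex.exp (Complex.I * ((vpt h n - vpt h m : ℝ) : ℂ) * (y : ℂ)) =
        Complex.exp (Complex.I * (vn : ℂ) * (y : ℂ)) *
          Complex.exp (-(Complex.I * ((vpt h m : ℝ) : ℂ) * (y : ℂ))) := by
      rw [← Complex.exp_add]
      congr 1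
      rw [hvndef]
      push_cast
      ring
    show ((V (x + y / 2) - V (x - y / 2) : ℝ) : ℂ) * _ / _ = F y * _
    rw [he, hFdef]
    have hDy : ((V (x + y / 2) - V (x - y / 2) : ℝ) : ℂ) = ((D y : ℝ) : ℂ) := by rw [hDdef]
    rw [hDy]
    ring
  -- bound on F
  have hFbound : ∀ y : ℝ, ‖F y‖ ≤ |y| * |D y| := by
    intro y
    have h1 : ‖F y‖ = |D y| * ‖Complex.exp (Complex.I * ((vn * y : ℝ) : ℂ)) - 1‖ / |vn| := by
      rw [hFdef]
      show ‖((D y : ℝ) : ℂ) * (Complex.exp (Complex.I * (vn : ℂ) * (y : ℂ)) - 1) / ((vn : ℝ) : ℂ)‖ = _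
      rw [norm_div, norm_mul]
      rw [show Complex.I * (vn : ℂ) * (y : ℂ) = Complex.I * ((vn * y : ℝ) : ℂ) by push_cast; ring]
      simp [Complex.norm_real, Real.norm_eq_abs]
    rw [h1]
    have h2 := norm_exp_I_mul_sub_one_le (vn * y)
    have hvn' : 0 < |vn| := abs_pos.2 hvn
    calc |D y| * ‖Complex.exp (Complex.I * ((vn * y : ℝ) : ℂ)) - 1‖ / |vn|
        ≤ |D y| * |vn * y| / |vn| := by gcongr
      _ = |y| * |D y| := by rw [abs_mul]; field_simp
  have hFmeas : Measurable F := by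
    rw [hFdef]
    have hcont : Continuous fun y : ℝ => Complex.exp (Complex.I * (vn : ℂ) * (y : ℂ)) - 1 := by
      apply Continuous.sub _ continuous_const
      exact Complex.continuous_exp.comp (continuous_const.mul Complex.continuous_ofReal)
    exact ((Complex.measurable_ofReal.comp hDm).mul hcont.measurable).div_const _
  -- bessel setup
  haveI : Fact ((1 : ℝ≥0∞) ≤ 2) := ⟨one_le_two⟩
  set eF : ℤ → ℝ → ℂ := fun m y => ((Real.sqrt h : ℝ) : ℂ) * Complex.exp (Complex.I * ((vpt h m : ℝ) : ℂ) * (y : ℂ)) with heFdef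
  have heFnorm : ∀ m y, ‖eF m y‖ = Real.sqrt h := by
    intro m y
    rw [heFdef]
    show ‖((Real.sqrt h : ℝ) : ℂ) * Complex.exp (Complex.I * ((vpt h m : ℝ) : ℂ) * (y : ℂ))‖ = _
    rw [norm_mul, show Complex.I * ((vpt h m : ℝ) : ℂ) * (y : ℂ) = ((vpt h m * y : ℝ) : ℂ) * Complex.I by push_cast; ring]
    rw [Complex.norm_exp_ofReal_mul_I, mul_one,
      Complex.norm_real, Real.norm_eq_abs, abs_of_nonneg (Real.sqrt_nonneg h)]
  have heFcont : ∀ m, Continuous (eF m) := by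
    intro m
    rw [heFdef]
    exact continuous_const.mul
      (Complex.continuous_exp.comp (continuous_const.mul Complex.continuous_ofReal))
  have heFmem : ∀ m, MemLp (eF m) 2 μ := by
    intro m
    apply MemLp.of_bound (heFcont m).aestronglyMeasurable (Real.sqrt h)
    exact Filter.Eventually.of_forall fun y => le_of_eq (heFnorm m y)
  have hcV0 : 0 ≤ cV := le_trans (abs_nonneg _) (hcV 0)
  have hmemS : ∀ᵐ y ∂μ, y ∈ S := by
    rw [hμdef]
    exact ae_restrict_mem (by rw [hSdef]; exact measurableSet_Icc)
  have hFmem : MemLp F 2 μ := by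
    apply MemLp.of_bound hFmeas.aestronglyMeasurable (L * (2 * cV))
    filter_upwards [hmemS] with y hy
    have hyL : |y| ≤ L := by
      rw [hSdef] at hy
      exact abs_le.2 ⟨hy.1, hy.2⟩
    calc ‖F y‖ ≤ |y| * |D y| := hFbound y
      _ ≤ L * (2 * cV) := mul_le_mul hyL (hDb y) (abs_nonneg _) (le_of_lt hLpos)
  set em : ℤ → Lp ℂ 2 μ := fun m => (heFmem m).toLp (eF m) with hemdef
  set fF : Lp ℂ 2 μ := hFmem.toLp F with hfFdef
  have hconjarg : ∀ (a y : ℝ), (starRingEnd ℂ) (Complex.exp (Complex.I * ((a : ℝ) : ℂ) * (y : ℂ))) =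
      Complex.exp (-(Complex.I * ((a : ℝ) : ℂ) * (y : ℂ))) := by
    intro a y
    rw [← Complex.exp_conj]
    congr 1
    simp [map_mul, Complex.conj_I, Complex.conj_ofReal]
  have h_on : Orthonormal ℂ em := by
    rw [orthonormal_iff_ite]
    intro m k
    rw [hemdef]
    show ⟪((heFmem m).toLp (eF m) : Lp ℂ 2 μ), ((heFmem k).toLp (eF k) : Lp ℂ 2 μ)⟫ = _
    rw [MeasureTheory.L2.inner_def]
    have h1 : (fun y => ⟪((heFmem m).toLp (eF m) : Lp ℂ 2 μ) y, ((heFmem k).toLp (eF k) : Lp ℂ 2 μ) y⟫)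
        =ᵐ[μ] fun y => (h : ℂ) *
          Complex.exp (Complex.I * ((2 * π * h * ((k - m : ℤ) : ℝ) : ℝ) : ℂ) * (y : ℂ)) := by
      filter_upwards [(heFmem m).coeFn_toLp, (heFmem k).coeFn_toLp] with y hy1 hy2
      rw [RCLike.inner_apply, mul_comm _ ((starRingEnd ℂ) _), hy1, hy2, heFdef]
      show (starRingEnd ℂ) (((Real.sqrt h : ℝ) : ℂ) * Complex.exp (Complex.I * ((vpt h m : ℝ) : ℂ) * (y : ℂ))) *
        (((Real.sqrt h : ℝ) : ℂ) * Complex.exp (Complex.I * ((vpt h k : ℝ) : ℂ) * (y : ℂ))) = _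
      rw [map_mul, Complex.conj_ofReal, hconjarg]
      rw [show ((Real.sqrt h : ℝ) : ℂ) * Complex.exp (-(Complex.I * ((vpt h m : ℝ) : ℂ) * (y : ℂ))) *
          (((Real.sqrt h : ℝ) : ℂ) * Complex.exp (Complex.I * ((vpt h k : ℝ) : ℂ) * (y : ℂ))) =
          (((Real.sqrt h * Real.sqrt h : ℝ) : ℂ)) *
            (Complex.exp (-(Complex.I * ((vpt h m : ℝ) : ℂ) * (y : ℂ)) + Complex.I * ((vpt h k : ℝ) : ℂ) * (y : ℂ))) by
        rw [Complex.exp_add]; push_cast; ring]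
      rw [Real.mul_self_sqrt (le_of_lt hh)]
      congr 2
      show _ = Complex.I * ((((2 * π * h * ((k - m : ℤ) : ℝ)) : ℝ) : ℂ)) * (y : ℂ)
      rw [vpt, vpt]
      push_cast
      ring
    rw [integral_congr_ae h1, integral_const_mul]
    rw [hμdef, hSdef, hLdef]
    rw [intExpIcc h hh (k - m)]
    by_cases hmk : m = k
    · subst hmk
      rw [if_pos rfl, if_pos (sub_self m)]
      rw [show ((1 / h : ℝ) : ℂ) = 1 / (h : ℂ) by push_cast; ring]
      rw [mul_one_div, div_self (by exact_mod_cast ne_of_gt hh)]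
    · rw [if_neg hmk, if_neg (sub_ne_zero.2 (Ne.symm hmk)), mul_zero]
  have hcm : ∀ m, ⟪em m, fF⟫ = ((Real.sqrt h : ℝ) : ℂ) * c m := by
    intro m
    rw [hemdef, hfFdef]
    show ⟪((heFmem m).toLp (eF m) : Lp ℂ 2 μ), (hFmem.toLp F : Lp ℂ 2 μ)⟫ = _
    rw [MeasureTheory.L2.inner_def]
    have h1 : (fun y => ⟪((heFmem m).toLp (eF m) : Lp ℂ 2 μ) y, (hFmem.toLp F : Lp ℂ 2 μ) y⟫)
        =ᵐ[μ] fun y => ((Real.sqrt h : ℝ) : ℂ) *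
          (F y * Complex.exp (-(Complex.I * ((vpt h m : ℝ) : ℂ) * (y : ℂ)))) := by
      filter_upwards [(heFmem m).coeFn_toLp, hFmem.coeFn_toLp] with y hy1 hy2
      rw [RCLike.inner_apply, mul_comm _ ((starRingEnd ℂ) _), hy1, hy2, heFdef]
      show (starRingEnd ℂ) (((Real.sqrt h : ℝ) : ℂ) * Complex.exp (Complex.I * ((vpt h m : ℝ) : ℂ) * (y : ℂ))) * F y = _
      rw [map_mul, Complex.conj_ofReal, hconjarg]
      ring
    rw [integral_congr_ae h1, integral_const_mul]
  have hnormF : ‖fF‖ ^ 2 = ∫ y, ‖F y‖ ^ 2 ∂μ := by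
    have h1 : ⟪fF, fF⟫ = ((∫ y, ‖F y‖ ^ 2 ∂μ : ℝ) : ℂ) := by
      rw [hfFdef]
      show ⟪(hFmem.toLp F : Lp ℂ 2 μ), (hFmem.toLp F : Lp ℂ 2 μ)⟫ = _
      rw [MeasureTheory.L2.inner_def]
      have h2 : (fun y => ⟪(hFmem.toLp F : Lp ℂ 2 μ) y, (hFmem.toLp F : Lp ℂ 2 μ) y⟫)
          =ᵐ[μ] fun y => ((‖F y‖ ^ 2 : ℝ) : ℂ) := by
        filter_upwards [hFmem.coeFn_toLp] with y hy
        rw [RCLike.inner_apply, mul_comm _ ((starRingEnd ℂ) _), hy, RCLike.conj_mul]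
        norm_cast
      rw [integral_congr_ae h2]
      exact integral_ofReal
    have h3 : ⟪fF, fF⟫ = ((‖fF‖ ^ 2 : ℝ) : ℂ) := by
      rw [inner_self_eq_norm_sq_to_K]
      norm_cast
    rw [h3] at h1
    exact_mod_cast h1
  set A : ℝ := ∫ y, y ^ 2 * (V (x + y / 2) - V (x - y / 2)) ^ 2 ∂μ with hAdef
  have hA0 : 0 ≤ A := by
    apply integral_nonneg
    intro y; positivity
  have hF2A : (∫ y, ‖F y‖ ^ 2 ∂μ) ≤ A := by
    rw [hAdef]
    have hInt1 : Integrable (fun y => ‖F y‖ ^ 2) μ := by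
      apply Integrable.mono' (integrable_const ((L * (2 * cV)) ^ 2))
        ((hFmeas.norm.pow_const 2).aestronglyMeasurable)
      filter_upwards [hmemS] with y hy
      have hyL : |y| ≤ L := by
        rw [hSdef] at hy
        exact abs_le.2 ⟨hy.1, hy.2⟩
      have hb : ‖F y‖ ≤ L * (2 * cV) :=
        le_trans (hFbound y) (mul_le_mul hyL (hDb y) (abs_nonneg _) (le_of_lt hLpos))
      rw [Real.norm_eq_abs, abs_of_nonneg (by positivity)]
      exact pow_le_pow_left₀ (norm_nonneg _) hb 2
    have hInt2 : Integrable (fun y => y ^ 2 * (V (x + y / 2) - V (x - y / 2)) ^ 2) μ := by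
      apply Integrable.mono' (integrable_const (L ^ 2 * (2 * cV) ^ 2))
        (((measurable_id.pow_const 2).mul (hDm.pow_const 2)).aestronglyMeasurable)
      filter_upwards [hmemS] with y hy
      have hyL : |y| ≤ L := by
        rw [hSdef] at hy
        exact abs_le.2 ⟨hy.1, hy.2⟩
      show ‖y ^ 2 * (V (x + y / 2) - V (x - y / 2)) ^ 2‖ ≤ _
      rw [Real.norm_eq_abs, abs_mul, abs_pow, abs_pow, sq_abs (V (x + y / 2) - V (x - y / 2))]
      have h1 : |y| ^ 2 ≤ L ^ 2 := pow_le_pow_left₀ (abs_nonneg _) hyL 2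
      have h2 : (V (x + y / 2) - V (x - y / 2)) ^ 2 ≤ (2 * cV) ^ 2 := by
        rw [← sq_abs]
        exact pow_le_pow_left₀ (abs_nonneg _) (hDb y) 2
      exact mul_le_mul h1 h2 (sq_nonneg _) (by positivity)
    apply integral_mono hInt1 hInt2
    intro y
    have h1 : ‖F y‖ ^ 2 ≤ (|y| * |D y|) ^ 2 := pow_le_pow_left₀ (norm_nonneg _) (hFbound y) 2
    calc ‖F y‖ ^ 2 ≤ (|y| * |D y|) ^ 2 := h1
      _ = y ^ 2 * (V (x + y / 2) - V (x - y / 2)) ^ 2 := by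
          rw [mul_pow, sq_abs, sq_abs]
  -- Bessel gives
  have hinnsq : ∀ m, ‖⟪em m, fF⟫‖ ^ 2 = h * ‖c m‖ ^ 2 := by
    intro m
    rw [hcm m, norm_mul, mul_pow]
    congr 1
    rw [Complex.norm_real, Real.norm_eq_abs, abs_of_nonneg (Real.sqrt_nonneg h),
      Real.sq_sqrt (le_of_lt hh)]
  have hBsm : Summable fun m => ‖c m‖ ^ 2 := by
    have hs := h_on.inner_products_summable (x := fF)
    have h2 : Summable fun m => h * ‖c m‖ ^ 2 := hs.congr hinnsq
    refine (h2.mul_left h⁻¹).congr fun m => ?_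
    field_simp
  have hBes : ∑' m, ‖c m‖ ^ 2 ≤ A / h := by
    have hb := h_on.tsum_inner_products_le fF
    rw [tsum_congr hinnsq, tsum_mul_left] at hb
    rw [hnormF] at hb
    rw [le_div_iff₀ hh, mul_comm]
    exact le_trans hb hF2A
  -- ℓ² facts for g
  have hGsm : Summable fun m => ‖g m‖ ^ 2 := by
    have h1 := hg.summable (p := 2) (by norm_num)
    refine h1.congr fun m => ?_
    norm_num
  -- put it together
  have hprod : Summable fun m => ‖g m‖ * ‖c m‖ := by
    apply Summable.of_nonneg_of_le (fun m => by positivity) (fun m => ?_)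
      ((hGsm.add hBsm).div_const 2)
    nlinarith [sq_nonneg (‖g m‖ - ‖c m‖), norm_nonneg (g m), norm_nonneg (c m)]
  have hT : ‖∑' m, g m * c m‖ ≤ ∑' m, ‖g m‖ * ‖c m‖ := by
    calc ‖∑' m, g m * c m‖ ≤ ∑' m, ‖g m * c m‖ :=
          norm_tsum_le_tsum_norm (by simpa [norm_mul] using hprod)
      _ = ∑' m, ‖g m‖ * ‖c m‖ := by simp [norm_mul]
  have hCS : ∑' m, ‖g m‖ * ‖c m‖ ≤
      Real.sqrt (∑' m, ‖g m‖ ^ 2) * Real.sqrt (∑' m, ‖c m‖ ^ 2) :=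
    tsum_mul_le_sqrt (fun m => ‖g m‖) (fun m => ‖c m‖) (fun m => norm_nonneg _)
      (fun m => norm_nonneg _) hGsm hBsm
  have hnormBd : ‖Bd V x h g n‖ = h * ‖∑' m, g m * c m‖ := by
    rw [hBd, norm_mul, norm_mul, Complex.norm_I, one_mul,
      Complex.norm_real, Real.norm_eq_abs, abs_of_pos hh]
  rw [hnormBd]
  have hsqc : Real.sqrt (∑' m, ‖c m‖ ^ 2) ≤ Real.sqrt (A / h) := Real.sqrt_le_sqrt hBes
  calc h * ‖∑' m, g m * c m‖ ≤ h * (∑' m, ‖g m‖ * ‖c m‖) := by gcongr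
    _ ≤ h * (Real.sqrt (∑' m, ‖g m‖ ^ 2) * Real.sqrt (∑' m, ‖c m‖ ^ 2)) := by
        have := hCS
        gcongr
    _ ≤ h * (Real.sqrt (∑' m, ‖g m‖ ^ 2) * Real.sqrt (A / h)) := by
        gcongr
    _ = (h * Real.sqrt (A / h)) * Real.sqrt (∑' m, ‖g m‖ ^ 2) := by ring
    _ = Real.sqrt (h * A) * Real.sqrt (∑' m, ‖g m‖ ^ 2) := by
        congr 1
        rw [show h * Real.sqrt (A / h) = Real.sqrt (h ^ 2) * Real.sqrt (A / h) by
          rw [Real.sqrt_sq (le_of_lt hh)]]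
        rw [← Real.sqrt_mul (sq_nonneg h)]
        congr 1
        field_simp
end

section
/- Let V : ℝ → ℝ be bounded measurable, fix x ∈ ℝ and h > 0, and set v_n = (2n+1)πh. For the discrete singularity-free operator (B_d g)_n = i h Σ_{m∈ℤ} g_m ∫_{−1/(2h)}^{1/(2h)} D_V(y)·(e^{i(v_n − v_m)y} − e^{−i v_m y})/v_n dy, one has for every g ∈ ℓ²(ℤ) and every n ∈ ℤ the pointwise bound |(B_d g)_n| ≤ (2/|v_n|)·(h·∫_{−1/(2h)}^{1/(2h)} |D_V(y)|² dy)^{1/2} · ‖g‖_{ℓ²(ℤ)}. -/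
open MeasureTheory Real

lemma parseval_aux {T : ℝ} [hT : Fact (0 < T)] (a : ℝ) (G : ℝ → ℂ) (hGm : Measurable G)
    (M : ℝ) (hM : ∀ y, ‖G y‖ ≤ M) :
    Summable (fun m : ℤ => ‖∫ y in Set.Ioc a (a+T), (fourier (-m) (y : AddCircle T)) * G y‖^2) ∧
    ∑' m : ℤ, ‖∫ y in Set.Ioc a (a+T), (fourier (-m) (y : AddCircle T)) * G y‖^2
      = T * ∫ y in Set.Ioc a (a+T), ‖G y‖^2 := by
  have hT0 := hT.out
  have hTne : (T:ℂ) ≠ 0 := by exact_mod_cast hT0.ne'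
  set φ : AddCircle T → ℂ := AddCircle.liftIoc T a G with hφ
  have hφm : Measurable φ :=
    hGm.comp (measurable_subtype_coe.comp (AddCircle.measurableEquivIoc T a).measurable)
  have hbd : ∀ t, ‖φ t‖ ≤ M := fun t => hM _
  have hφ2 : MemLp φ 2 AddCircle.haarAddCircle :=
    MemLp.of_bound hφm.aestronglyMeasurable M (Filter.Eventually.of_forall hbd)
  set f := hφ2.toLp φ with hf
  have hcoeff : ∀ m : ℤ, fourierCoeff (⇑f) m = fourierCoeff φ m := fun m =>
    integral_congr_ae (by filter_upwards [hφ2.coeFn_toLp] with t ht; rw [ht])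
  have hkey : ∀ m : ℤ, (∫ y in Set.Ioc a (a+T), (fourier (-m) (y : AddCircle T)) * G y)
      = (T:ℂ) * fourierCoeff φ m := by
    intro m
    rw [fourierCoeff_eq_intervalIntegral φ m a,
      intervalIntegral.integral_of_le (by linarith : a ≤ a + T)]
    have : (∫ y in Set.Ioc a (a+T), fourier (-m) (y : AddCircle T) • φ (y:ℝ))
        = ∫ y in Set.Ioc a (a+T), (fourier (-m) (y : AddCircle T)) * G y := by
      refine setIntegral_congr_fun measurableSet_Ioc fun y hy => ?_
      rw [hφ, AddCircle.liftIoc_coe_apply hy, smul_eq_mul]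
    rw [this, Complex.real_smul]
    push_cast
    rw [← mul_assoc, mul_one_div, div_self hTne, one_mul]
  have hnorm : ∀ m : ℤ, ‖∫ y in Set.Ioc a (a+T), (fourier (-m) (y : AddCircle T)) * G y‖^2
      = T^2 * ‖fourierCoeff (⇑f) m‖^2 := by
    intro m
    rw [hkey m, hcoeff m, norm_mul, mul_pow, Complex.norm_real, Real.norm_eq_abs,
      abs_of_pos hT0]
  have hsum2 : Summable (fun m : ℤ => ‖fourierCoeff (⇑f) m‖^2) := by
    have := ((fourierBasis.repr f).property).summable (p := 2) (by norm_num)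
    simp only [fourierBasis_repr] at this
    convert this using 2 with m
    norm_num
  have hpars := tsum_sq_fourierCoeff f
  have h2 := AddCircle.integral_preimage T a (fun t => ‖φ t‖^2)
  rw [AddCircle.volume_eq_smul_haarAddCircle, integral_smul_measure,
    ENNReal.toReal_ofReal hT0.le, smul_eq_mul] at h2
  have h4 : (∫ y in Set.Ioc a (a+T), ‖φ (y:ℝ)‖^2) = ∫ y in Set.Ioc a (a+T), ‖G y‖^2 :=
    setIntegral_congr_fun measurableSet_Ioc fun y hy => by
      rw [hφ, AddCircle.liftIoc_coe_apply hy]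
  have h1 : (∫ t : AddCircle T, ‖(⇑f) t‖^2 ∂AddCircle.haarAddCircle)
      = ∫ t : AddCircle T, ‖φ t‖^2 ∂AddCircle.haarAddCircle :=
    integral_congr_ae (by filter_upwards [hφ2.coeFn_toLp] with t ht; rw [ht])
  have hint : (∫ t : AddCircle T, ‖(⇑f) t‖^2 ∂AddCircle.haarAddCircle)
      = (1/T) * ∫ y in Set.Ioc a (a+T), ‖G y‖^2 := by
    rw [h1, ← h4, h2]
    field_simp
  constructor
  · simp only [hnorm]
    exact hsum2.mul_left _
  · calc ∑' m : ℤ, ‖∫ y in Set.Ioc a (a+T), (fourier (-m) (y : AddCircle T)) * G y‖^2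
        = ∑' m : ℤ, T^2 * ‖fourierCoeff (⇑f) m‖^2 := by simp only [hnorm]
      _ = T^2 * ∑' m : ℤ, ‖fourierCoeff (⇑f) m‖^2 := tsum_mul_left
      _ = T^2 * ((1/T) * ∫ y in Set.Ioc a (a+T), ‖G y‖^2) := by rw [hpars, hint]
      _ = T * ∫ y in Set.Ioc a (a+T), ‖G y‖^2 := by field_simp

lemma cs_aux (u v : ℤ → ℝ) (hu : ∀ m, 0 ≤ u m) (hv : ∀ m, 0 ≤ v m)
    (hu2 : Summable fun m => u m ^ 2) (hv2 : Summable fun m => v m ^ 2) :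
    Summable (fun m => u m * v m) ∧
    ∑' m, u m * v m ≤ Real.sqrt (∑' m, u m ^ 2) * Real.sqrt (∑' m, v m ^ 2) := by
  have hsum : Summable (fun m => u m * v m) := by
    refine Summable.of_nonneg_of_le (fun m => mul_nonneg (hu m) (hv m))
      (fun m => ?_) ((hu2.add hv2).div_const 2)
    nlinarith [sq_nonneg (u m - v m)]
  refine ⟨hsum, hsum.tsum_le_of_sum_le fun s => ?_⟩
  have h1 : (∑ m ∈ s, u m * v m) ^ 2 ≤ (∑ m ∈ s, u m ^ 2) * ∑ m ∈ s, v m ^ 2 :=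
    Finset.sum_mul_sq_le_sq_mul_sq s u v
  have h2 : (∑ m ∈ s, u m ^ 2) ≤ ∑' m, u m ^ 2 :=
    Summable.sum_le_tsum s (fun m _ => sq_nonneg _) hu2
  have h3 : (∑ m ∈ s, v m ^ 2) ≤ ∑' m, v m ^ 2 :=
    Summable.sum_le_tsum s (fun m _ => sq_nonneg _) hv2
  have hs0 : 0 ≤ ∑ m ∈ s, u m * v m :=
    Finset.sum_nonneg fun m _ => mul_nonneg (hu m) (hv m)
  have := Real.sqrt_le_sqrt (h1.trans (mul_le_mul h2 h3 (Finset.sum_nonneg fun m _ => sq_nonneg _)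
    ((Summable.sum_le_tsum s (fun m _ => sq_nonneg _) hu2).trans' (Finset.sum_nonneg fun m _ => sq_nonneg _))))
  rwa [Real.sqrt_sq hs0, Real.sqrt_mul (tsum_nonneg fun m => sq_nonneg _)] at this

lemma key_aux (h : ℝ) [Fact (0 < 1/h)] (hh : 0 < h) (n m : ℤ) (d y : ℝ) :
    (fourier (-m) (y : AddCircle (1/h))) *
      ((d:ℂ) * (Complex.exp (Complex.I * ((vpt h n : ℝ):ℂ) * (y:ℂ)) - 1) *
        Complex.exp (-(Complex.I * ((π * h : ℝ):ℂ) * (y:ℂ)))) =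
    (d : ℂ) * (Complex.exp (Complex.I * ((vpt h n - vpt h m : ℝ) : ℂ) * (y : ℂ)) -
            Complex.exp (-(Complex.I * ((vpt h m : ℝ) : ℂ) * (y : ℂ)))) := by
  rw [fourier_coe_apply]
  have hne : (h:ℂ) ≠ 0 := by exact_mod_cast hh.ne'
  have e1 : Complex.exp (2 * (π:ℂ) * Complex.I * ((-m : ℤ):ℂ) * (y:ℂ) / ((1/h : ℝ):ℂ)) *
      Complex.exp (-(Complex.I * ((π * h : ℝ):ℂ) * (y:ℂ))) =
      Complex.exp (-(Complex.I * ((vpt h m : ℝ) : ℂ) * (y : ℂ))) := by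
    rw [← Complex.exp_add]
    congr 1
    push_cast [vpt]
    field_simp
    ring
  have e2 : Complex.exp (Complex.I * ((vpt h n : ℝ):ℂ) * (y:ℂ)) *
      Complex.exp (-(Complex.I * ((vpt h m : ℝ) : ℂ) * (y : ℂ))) =
      Complex.exp (Complex.I * ((vpt h n - vpt h m : ℝ) : ℂ) * (y : ℂ)) := by
    rw [← Complex.exp_add]
    congr 1
    push_cast [vpt]
    ring
  linear_combination ((d:ℂ) * (Complex.exp (Complex.I * ((vpt h n : ℝ):ℂ) * (y:ℂ)) - 1)) * e1
    + (d:ℂ) * e2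

/-- Pointwise high-velocity bound for the discrete
singularity-free operator:
`|(B_d g)_n| ≤ (2/|v_n|) (h ∫_{−1/(2h)}^{1/(2h)} |D_V(y)|² dy)^{1/2} ‖g‖_{ℓ²}`. -/
theorem stmt12 (V : ℝ → ℝ) (hVm : Measurable V) (hVb : ∃ c : ℝ, ∀ t : ℝ, |V t| ≤ c)
    (x h : ℝ) (hh : 0 < h) (g : ℤ → ℂ) (hg : Memℓp g 2) (n : ℤ) :
    ‖Bd V x h g n‖ ≤
      2 / |vpt h n| *
        Real.sqrt (h * ∫ y in Set.Icc (-(1 / (2 * h))) (1 / (2 * h)),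
            (V (x + y / 2) - V (x - y / 2)) ^ 2) *
        Real.sqrt (∑' m : ℤ, ‖g m‖ ^ 2) := by
  obtain ⟨c, hc⟩ := hVb
  have hc0 : 0 ≤ c := (abs_nonneg _).trans (hc 0)
  haveI : Fact (0 < 1/h) := ⟨by positivity⟩
  -- basic nonvanishing of v_n
  have hvn : vpt h n ≠ 0 := by
    have h1 : ((2*n+1 : ℤ) : ℝ) ≠ 0 := Int.cast_ne_zero.mpr (by omega)
    have : (2 * (n:ℝ) + 1) ≠ 0 := by push_cast at h1 ⊢; exact h1
    exact mul_ne_zero (mul_ne_zero this Real.pi_ne_zero) hh.ne'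
  have hvn' : 0 < |vpt h n| := abs_pos.mpr hvn
  -- names
  set a : ℝ := -(1 / (2 * h)) with ha
  have hb : a + 1/h = 1 / (2 * h) := by rw [ha]; field_simp; ring
  set D : ℝ → ℝ := fun y => V (x + y / 2) - V (x - y / 2) with hD
  have hDm : Measurable D := by
    apply Measurable.sub <;> exact hVm.comp (by measurability)
  have hDb : ∀ y, |D y| ≤ 2 * c := fun y => by
    rw [hD]
    calc |V (x + y / 2) - V (x - y / 2)| ≤ |V (x + y / 2)| + |V (x - y / 2)| := abs_sub _ _
      _ ≤ 2 * c := by have := hc (x + y/2); have := hc (x - y/2); linarith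
  set G : ℝ → ℂ := fun y => ((D y : ℝ):ℂ) *
      (Complex.exp (Complex.I * ((vpt h n : ℝ):ℂ) * (y:ℂ)) - 1) *
      Complex.exp (-(Complex.I * ((π * h : ℝ):ℂ) * (y:ℂ))) with hG
  have hGm : Measurable G := by
    apply Measurable.mul
    apply Measurable.mul
    · exact Complex.measurable_ofReal.comp hDm
    · exact ((Complex.measurable_exp.comp (by measurability)).sub measurable_const)
    · exact Complex.measurable_exp.comp (by measurability)
  have hexp1 : ∀ (r y : ℝ), ‖Complex.exp (Complex.I * (r:ℂ) * (y:ℂ))‖ = 1 := by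
    intro r y
    rw [Complex.norm_exp]
    simp [Complex.mul_re]
  have hexp2 : ∀ (r y : ℝ), ‖Complex.exp (-(Complex.I * (r:ℂ) * (y:ℂ)))‖ = 1 := by
    intro r y
    rw [Complex.norm_exp]
    simp [Complex.mul_re]
  have hGb : ∀ y, ‖G y‖ ≤ |D y| * 2 := by
    intro y
    rw [hG]
    simp only [norm_mul, Complex.norm_real, Real.norm_eq_abs, hexp2, mul_one]
    have : ‖Complex.exp (Complex.I * ((vpt h n : ℝ):ℂ) * (y:ℂ)) - 1‖ ≤ 2 := by
      calc ‖Complex.exp (Complex.I * ((vpt h n : ℝ):ℂ) * (y:ℂ)) - 1‖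
          ≤ ‖Complex.exp (Complex.I * ((vpt h n : ℝ):ℂ) * (y:ℂ))‖ + ‖(1:ℂ)‖ := norm_sub_le _ _
        _ = 2 := by rw [hexp1]; norm_num
    exact mul_le_mul_of_nonneg_left this (abs_nonneg _)
  have hGM : ∀ y, ‖G y‖ ≤ 2 * c * 2 := fun y =>
    (hGb y).trans (mul_le_mul_of_nonneg_right (hDb y) (by norm_num))
  -- the Fourier coefficients
  set cm : ℤ → ℂ := fun m =>
    ∫ y in Set.Ioc a (a + 1/h), (fourier (-m) (y : AddCircle (1/h))) * G y with hcm
  obtain ⟨hsumc, hparse⟩ := parseval_aux (T := 1/h) a G hGm (2 * c * 2) hGM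
  -- rewrite Bd
  have hBd : Bd V x h g n = Complex.I * (h:ℂ) *
      ∑' m : ℤ, g m * (cm m / ((vpt h n : ℝ):ℂ)) := by
    rw [Bd]
    congr 1
    apply tsum_congr
    intro m
    congr 1
    rw [integral_div]
    congr 1
    have hset : Set.Icc (-(1 / (2 * h))) (1 / (2 * h)) = Set.Icc a (a + 1/h) := by
      rw [hb, ha]
    rw [hset, integral_Icc_eq_integral_Ioc]
    show _ = ∫ y in Set.Ioc a (a + 1/h), (fourier (-m) (y : AddCircle (1/h))) * G y
    exact setIntegral_congr_fun measurableSet_Ioc fun y hy => (key_aux h hh n m (D y) y).symm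
  -- set up Cauchy–Schwarz
  have hu2 : Summable (fun m : ℤ => ‖g m‖ ^ 2) := by
    have := hg.summable (p := 2) (by norm_num)
    convert this using 2 with m
    norm_num
  obtain ⟨hsumuv, hCS⟩ := cs_aux (fun m => ‖g m‖) (fun m => ‖cm m‖)
    (fun m => norm_nonneg _) (fun m => norm_nonneg _) hu2 hsumc
  -- bound the ℓ² norm of the coefficients
  set Q : ℝ := ∫ y in Set.Icc a (a + 1/h), (D y)^2 with hQ
  have hQ0 : 0 ≤ Q := integral_nonneg fun y => sq_nonneg _
  have hIG : IntegrableOn (fun y => ‖G y‖^2) (Set.Ioc a (a + 1/h)) := by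
    apply Measure.integrableOn_of_bounded (M := (2*c*2)^2) measure_Ioc_lt_top.ne
      (hGm.norm.pow_const 2).aestronglyMeasurable
    refine Filter.Eventually.of_forall fun y => ?_
    rw [Real.norm_eq_abs, abs_of_nonneg (sq_nonneg _)]
    exact pow_le_pow_left₀ (norm_nonneg _) (hGM y) 2
  have hID : IntegrableOn (fun y => (D y)^2) (Set.Ioc a (a + 1/h)) := by
    apply Measure.integrableOn_of_bounded (M := (2*c)^2) measure_Ioc_lt_top.ne
      (hDm.pow_const 2).aestronglyMeasurable
    refine Filter.Eventually.of_forall fun y => ?_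
    rw [Real.norm_eq_abs, abs_of_nonneg (sq_nonneg _), ← sq_abs]
    exact pow_le_pow_left₀ (abs_nonneg _) (hDb y) 2
  have hG4 : (∫ y in Set.Ioc a (a + 1/h), ‖G y‖^2) ≤ 4 * Q := by
    have hmono : (∫ y in Set.Ioc a (a + 1/h), ‖G y‖^2)
        ≤ ∫ y in Set.Ioc a (a + 1/h), 4 * (D y)^2 := by
      refine setIntegral_mono_on hIG (hID.const_mul 4) measurableSet_Ioc fun y _ => ?_
      calc ‖G y‖^2 ≤ (|D y| * 2)^2 := pow_le_pow_left₀ (norm_nonneg _) (hGb y) 2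
        _ = 4 * (D y)^2 := by rw [mul_pow, sq_abs]; ring
    rw [integral_const_mul] at hmono
    have hQ' : (∫ y in Set.Ioc a (a + 1/h), (D y)^2) = Q := by
      rw [hQ, integral_Icc_eq_integral_Ioc]
    rwa [hQ'] at hmono
  have hvsum : (∑' m : ℤ, ‖cm m‖^2) ≤ (1/h) * (4 * Q) := by
    calc (∑' m : ℤ, ‖cm m‖^2)
        = (1/h) * ∫ y in Set.Ioc a (a + 1/h), ‖G y‖^2 := hparse
      _ ≤ (1/h) * (4 * Q) := mul_le_mul_of_nonneg_left hG4 (by positivity)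
  have hhQ : 0 ≤ h * Q := mul_nonneg hh.le hQ0
  -- final assembly
  rw [← hb]
  show ‖Bd V x h g n‖ ≤ 2 / |vpt h n| * Real.sqrt (h * Q) * Real.sqrt (∑' m : ℤ, ‖g m‖ ^ 2)
  rw [hBd, norm_mul, norm_mul, Complex.norm_I, one_mul, Complex.norm_real, Real.norm_eq_abs,
    abs_of_pos hh]
  have hnormterm : ∀ m : ℤ, ‖g m * (cm m / ((vpt h n:ℝ):ℂ))‖ = ‖g m‖ * ‖cm m‖ / |vpt h n| := by
    intro m
    rw [norm_mul, norm_div, Complex.norm_real, Real.norm_eq_abs, mul_div_assoc]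
  have hsumnorm : Summable (fun m : ℤ => ‖g m * (cm m / ((vpt h n:ℝ):ℂ))‖) := by
    simp only [hnormterm]
    exact hsumuv.div_const _
  have h5 : ‖∑' m : ℤ, g m * (cm m / ((vpt h n:ℝ):ℂ))‖
      ≤ (∑' m : ℤ, ‖g m‖ * ‖cm m‖) / |vpt h n| := by
    refine (norm_tsum_le_tsum_norm hsumnorm).trans_eq ?_
    simp only [hnormterm]
    exact tsum_div_const
  set A : ℝ := Real.sqrt (∑' m : ℤ, ‖g m‖ ^ 2) with hA
  have hA0 : 0 ≤ A := Real.sqrt_nonneg _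
  have hBle : Real.sqrt (∑' m : ℤ, ‖cm m‖^2) ≤ Real.sqrt ((1/h) * (4 * Q)) :=
    Real.sqrt_le_sqrt hvsum
  have hs : Real.sqrt ((1/h) * (4 * Q)) = 2 * Real.sqrt (h * Q) / h := by
    rw [show (1/h) * (4 * Q) = (2 * Real.sqrt (h * Q) / h)^2 by
      rw [div_pow, mul_pow, Real.sq_sqrt hhQ]; field_simp; ring]
    exact Real.sqrt_sq (by positivity)
  calc h * ‖∑' m : ℤ, g m * (cm m / ((vpt h n:ℝ):ℂ))‖
      ≤ h * ((∑' m : ℤ, ‖g m‖ * ‖cm m‖) / |vpt h n|) :=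
        mul_le_mul_of_nonneg_left h5 hh.le
    _ ≤ h * ((A * Real.sqrt (∑' m : ℤ, ‖cm m‖^2)) / |vpt h n|) := by
        gcongr
    _ ≤ h * ((A * Real.sqrt ((1/h) * (4 * Q))) / |vpt h n|) := by
        gcongr
    _ = 2 / |vpt h n| * Real.sqrt (h * Q) * A := by
        rw [hs]
        field_simp
end

section
/- Let V : ℝ → ℝ be bounded measurable, fix x ∈ ℝ and h > 0, and set v_n = (2n+1)πh. For the discrete singularity-free operator (B_d g)_n = i h Σ_{m∈ℤ} g_m ∫_{−1/(2h)}^{1/(2h)} D_V(y)·(e^{i(v_n − v_m)y} − e^{−i v_m y})/v_n dy, the sum over the low-velocity indices satisfies, for every g ∈ ℓ²(ℤ): Σ_{n∈ℤ, |(2n+1)πh| ≤ 1} |(B_d g)_n|² ≤ (1/π + h)·(∫_{−1/(2h)}^{1/(2h)} y²|D_V(y)|² dy)·‖g‖²_{ℓ²(ℤ)}. -/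
open MeasureTheory Real

section Aux

lemma aux_norm_exp_I_mul_sub_one (t : ℝ) :
    ‖Complex.exp (Complex.I * (t : ℂ)) - 1‖ ≤ |t| := by
  have key : Complex.exp (Complex.I * (t : ℂ)) - 1
      = Complex.exp (Complex.I * ((t / 2 : ℝ) : ℂ)) *
        (2 * Complex.I * ((Real.sin (t / 2) : ℝ) : ℂ)) := by
    have hsin : ((Real.sin (t / 2) : ℝ) : ℂ) = Complex.sin ((t / 2 : ℝ) : ℂ) := by
      simp [Complex.ofReal_sin]
    rw [hsin, Complex.sin]
    have h1 : Complex.exp (Complex.I * (t : ℂ))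
        = Complex.exp (Complex.I * ((t/2 : ℝ) : ℂ)) * Complex.exp (Complex.I * ((t/2:ℝ) : ℂ)) := by
      rw [← Complex.exp_add]
      congr 1
      push_cast
      ring
    have h2 : (1 : ℂ) = Complex.exp (Complex.I * ((t/2:ℝ) : ℂ)) *
        Complex.exp (-(Complex.I * ((t/2:ℝ) : ℂ))) := by
      rw [← Complex.exp_add]; simp
    rw [h1]; nth_rewrite 1 [h2]
    have hI : ((t/2:ℝ) : ℂ) * Complex.I = Complex.I * ((t/2:ℝ):ℂ) := by ring
    rw [hI]
    have : -(((t/2:ℝ):ℂ)) * Complex.I = -(Complex.I * ((t/2:ℝ):ℂ)) := by ring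
    rw [this]
    have hI2 : (Complex.I : ℂ) ^ 2 = -1 := Complex.I_sq
    linear_combination (Complex.exp (Complex.I * ((t/2:ℝ):ℂ)) *
      (Complex.exp (Complex.I * ((t/2:ℝ):ℂ)) - Complex.exp (-(Complex.I * ((t/2:ℝ):ℂ))))) * hI2
  rw [key]
  rw [norm_mul]
  have h1 : ‖Complex.exp (Complex.I * ((t / 2 : ℝ) : ℂ))‖ = 1 := by
    rw [mul_comm]; exact Complex.norm_exp_ofReal_mul_I _
  rw [h1, one_mul]
  have : ‖(2 : ℂ) * Complex.I * ((Real.sin (t / 2) : ℝ) : ℂ)‖ = 2 * |Real.sin (t/2)| := by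
    simp only [norm_mul, Complex.norm_I, Complex.norm_real, Real.norm_eq_abs,
      Complex.norm_ofNat]
    ring
  rw [this]
  calc 2 * |Real.sin (t/2)| ≤ 2 * |t/2| := by
        have := Real.abs_sin_le_abs (x := t/2)
        linarith [this]
    _ = |t| := by rw [abs_div]; simp; ring

/-- Cauchy–Schwarz for tsums of nonnegative reals. -/
lemma aux_tsum_CS {f q : ℤ → ℝ} (hf : ∀ i, 0 ≤ f i) (hq : ∀ i, 0 ≤ q i)
    (hf2 : Summable (fun i => f i ^ 2)) (hq2 : Summable (fun i => q i ^ 2)) :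
    ∑' i, f i * q i ≤ Real.sqrt (∑' i, f i ^ 2) * Real.sqrt (∑' i, q i ^ 2) := by
  have hfg : Summable (fun i => f i * q i) := by
    apply Summable.of_nonneg_of_le (fun i => mul_nonneg (hf i) (hq i))
      (fun i => ?_) ((hf2.add hq2).div_const 2)
    have h5 := sq_nonneg (f i - q i)
    have : (fun i => (f i ^ 2 + q i ^ 2)) i / 2 = (f i ^2 + q i ^2)/2 := rfl
    calc f i * q i ≤ (f i ^2 + q i ^2)/2 := by nlinarith
      _ = _ := by simp [Pi.add_apply]
  refine Summable.tsum_le_of_sum_le hfg fun s => ?_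
  have h1 : (∑ i ∈ s, f i * q i) ^ 2 ≤ (∑ i ∈ s, f i ^ 2) * ∑ i ∈ s, q i ^ 2 :=
    Finset.sum_mul_sq_le_sq_mul_sq s f q
  have h2 : (∑ i ∈ s, f i ^ 2) ≤ ∑' i, f i ^ 2 :=
    Summable.sum_le_tsum s (fun i _ => sq_nonneg _) hf2
  have h3 : (∑ i ∈ s, q i ^ 2) ≤ ∑' i, q i ^ 2 :=
    Summable.sum_le_tsum s (fun i _ => sq_nonneg _) hq2
  have h4 : (∑ i ∈ s, f i * q i) ^ 2 ≤ (∑' i, f i ^ 2) * ∑' i, q i ^ 2 := by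
    calc (∑ i ∈ s, f i * q i) ^ 2 ≤ (∑ i ∈ s, f i ^ 2) * ∑ i ∈ s, q i ^ 2 := h1
      _ ≤ (∑' i, f i ^ 2) * ∑' i, q i ^ 2 := by
          apply mul_le_mul h2 h3 (Finset.sum_nonneg fun i _ => sq_nonneg _)
            (le_trans (Finset.sum_nonneg fun i _ => sq_nonneg _) h2)
  calc ∑ i ∈ s, f i * q i ≤ Real.sqrt ((∑ i ∈ s, f i * q i) ^ 2) := by
        rw [Real.sqrt_sq (Finset.sum_nonneg fun i _ => mul_nonneg (hf i) (hq i))]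
    _ ≤ Real.sqrt ((∑' i, f i ^ 2) * ∑' i, q i ^ 2) := Real.sqrt_le_sqrt h4
    _ = Real.sqrt (∑' i, f i ^ 2) * Real.sqrt (∑' i, q i ^ 2) := Real.sqrt_mul
        (tsum_nonneg fun i => sq_nonneg _) _

/-- The key orthogonality integral. -/
lemma aux_orth {h : ℝ} (hh : 0 < h) (m m' : ℤ) :
    (∫ y in Set.Icc (-(1 / (2 * h))) (1 / (2 * h)),
      Complex.exp (Complex.I * ((vpt h m - vpt h m' : ℝ) : ℂ) * (y : ℂ)))
      = if m = m' then ((1 / h : ℝ) : ℂ) else 0 := by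
  by_cases hmm : m = m'
  · subst hmm
    simp only [sub_self, Complex.ofReal_zero, mul_zero, zero_mul, Complex.exp_zero, if_pos]
    rw [setIntegral_const, measureReal_def, Real.volume_Icc]
    have h19 : (1 / (2 * h)) - (-(1 / (2 * h))) = 1 / h := by
      rw [sub_neg_eq_add, ← add_div]
      rw [show (1:ℝ) + 1 = 2 by norm_num]
      rw [div_eq_div_iff (by positivity) (by positivity)]
      ring
    rw [h19, ENNReal.toReal_ofReal (by positivity), Complex.real_smul, mul_one]
  · rw [if_neg hmm]
    set k : ℤ := m - m' with hk
    have hk0 : k ≠ 0 := sub_ne_zero.mpr hmm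
    have hd : vpt h m - vpt h m' = 2 * (k : ℝ) * π * h := by
      simp only [vpt, hk]; push_cast; ring
    have hd0 : (2 : ℝ) * (k : ℝ) * π * h ≠ 0 := by
      have : (k : ℝ) ≠ 0 := Int.cast_ne_zero.mpr hk0
      positivity
    rw [hd]
    set c : ℂ := Complex.I * ((2 * (k : ℝ) * π * h : ℝ) : ℂ) with hc
    have hc0 : c ≠ 0 := mul_ne_zero Complex.I_ne_zero (Complex.ofReal_ne_zero.mpr hd0)
    have hle : (-(1 / (2 * h))) ≤ (1 / (2 * h)) := by
      have : (0:ℝ) ≤ 1 / (2*h) := by positivity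
      linarith
    rw [integral_Icc_eq_integral_Ioc, ← intervalIntegral.integral_of_le hle]
    rw [integral_exp_mul_complex hc0]
    have hb : c * ((1 / (2 * h) : ℝ) : ℂ) = (k : ℂ) * (π * Complex.I) := by
      rw [hc]
      push_cast
      have hh0 : (h : ℂ) ≠ 0 := by
        exact_mod_cast Complex.ofReal_ne_zero.mpr (by
          intro h0
          rw [h0] at hh
          exact lt_irrefl 0 hh)
      field_simp
    have ha : c * ((-(1 / (2 * h)) : ℝ) : ℂ) = ((-k : ℤ) : ℂ) * (π * Complex.I) := by
      have hcoe : ((-(1 / (2 * h)) : ℝ) : ℂ) = -(((1 / (2 * h) : ℝ)) : ℂ) := by push_cast; ring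
      rw [hcoe, mul_neg, hb]
      push_cast
      ring
    rw [hb, ha, Complex.exp_int_mul, Complex.exp_int_mul, Complex.exp_pi_mul_I]
    rcases Int.even_or_odd k with he | ho
    · rw [he.neg_one_zpow, (he.neg).neg_one_zpow]
      simp
    · rw [Odd.neg_one_zpow ho, Odd.neg_one_zpow (by simpa using ho.neg)]
      simp

lemma aux_norm_exp_neg (r s : ℝ) : ‖Complex.exp (-(Complex.I * (r : ℂ) * (s : ℂ)))‖ = 1 := by
  have : -(Complex.I * (r : ℂ) * (s : ℂ)) = ((-(r * s) : ℝ) : ℂ) * Complex.I := by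
    push_cast; ring
  rw [this]
  exact Complex.norm_exp_ofReal_mul_I _

lemma aux_norm_exp_pos (r s : ℝ) : ‖Complex.exp (Complex.I * (r : ℂ) * (s : ℂ))‖ = 1 := by
  have : Complex.I * (r : ℂ) * (s : ℂ) = (((r * s) : ℝ) : ℂ) * Complex.I := by
    push_cast; ring
  rw [this]
  exact Complex.norm_exp_ofReal_mul_I _

end Aux


/-- Low-velocity part of the discrete singularity-free
operator: summing over the indices `n` with `|(2n+1)πh| ≤ 1`,
`Σ_{|v_n|≤1} |(B_d g)_n|² ≤ (1/π + h) (∫_{−1/(2h)}^{1/(2h)} y²|D_V(y)|² dy) ‖g‖²_{ℓ²}`. -/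
theorem stmt13 (V : ℝ → ℝ) (hVm : Measurable V) (hVb : ∃ c : ℝ, ∀ t : ℝ, |V t| ≤ c)
    (x h : ℝ) (hh : 0 < h) (g : ℤ → ℂ) (hg : Memℓp g 2) :
    ∑' n : {n : ℤ // |vpt h n| ≤ 1}, ‖Bd V x h g (n : ℤ)‖ ^ 2 ≤
      (1 / π + h) *
        (∫ y in Set.Icc (-(1 / (2 * h))) (1 / (2 * h)),
          y ^ 2 * (V (x + y / 2) - V (x - y / 2)) ^ 2) *
        ∑' m : ℤ, ‖g m‖ ^ 2 := by
  classical
  obtain ⟨c, hc⟩ := hVb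
  have hπ : 0 < π := Real.pi_pos
  have hc0 : 0 ≤ c := (abs_nonneg _).trans (hc 0)
  set S : Set ℝ := Set.Icc (-(1 / (2 * h))) (1 / (2 * h)) with hS
  set μ : Measure ℝ := volume.restrict S with hμ
  have ha0 : (0:ℝ) < 1 / (2 * h) := by positivity
  have hSmeas : MeasurableSet S := by rw [hS]; exact measurableSet_Icc
  haveI hfin : IsFiniteMeasure μ := by
    constructor
    rw [hμ, Measure.restrict_apply_univ, hS, Real.volume_Icc]
    exact ENNReal.ofReal_lt_top
  set D : ℝ → ℝ := fun y => V (x + y / 2) - V (x - y / 2) with hDdef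
  have hDm : Measurable D := by
    apply Measurable.sub
    · exact hVm.comp (measurable_const.add (measurable_id.div_const 2))
    · exact hVm.comp (measurable_const.sub (measurable_id.div_const 2))
  have hDb : ∀ y, |D y| ≤ 2 * c := by
    intro y
    calc |D y| ≤ |V (x + y / 2)| + |V (x - y / 2)| := abs_sub _ _
      _ ≤ c + c := add_le_add (hc _) (hc _)
      _ = 2 * c := by ring
  set K : ℝ := ∫ y, y ^ 2 * (V (x + y / 2) - V (x - y / 2)) ^ 2 ∂μ with hK
  have hKD : K = ∫ y, y ^ 2 * (D y) ^ 2 ∂μ := rfl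
  have hKnonneg : 0 ≤ K := by
    rw [hKD]; apply integral_nonneg; intro y; positivity
  set Sg : ℝ := ∑' m : ℤ, ‖g m‖ ^ 2 with hSg
  have hgsum : Summable fun m : ℤ => ‖g m‖ ^ 2 := by
    have h2 := hg.summable (p := 2) (by norm_num)
    have h3 : ∀ m : ℤ, ‖g m‖ ^ ((2 : ENNReal).toReal) = ‖g m‖ ^ (2:ℕ) := by
      intro m
      rw [show ((2 : ENNReal)).toReal = ((2:ℕ):ℝ) by norm_num, Real.rpow_natCast]
    exact (summable_congr h3).mp h2
  have hSg0 : 0 ≤ Sg := tsum_nonneg fun m => sq_nonneg _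
  have hv0 : ∀ n : ℤ, vpt h n ≠ 0 := by
    intro n
    have h1 : ((2 * n + 1 : ℤ) : ℝ) ≠ 0 := Int.cast_ne_zero.mpr (by omega)
    have h2 : (2 * (n:ℝ) + 1) ≠ 0 := by push_cast at h1; exact h1
    simp only [vpt]
    intro hcon
    rcases mul_eq_zero.mp hcon with h3 | h3
    · rcases mul_eq_zero.mp h3 with h4 | h4
      · exact h2 h4
      · exact hπ.ne' h4
    · exact hh.ne' h3
  -- the function φ n
  set φ : ℤ → ℝ → ℂ := fun n y =>
    (Complex.exp (Complex.I * ((vpt h n : ℝ) : ℂ) * (y : ℂ)) - 1) / ((vpt h n : ℝ) : ℂ)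
    with hφdef
  have hφ_bound : ∀ n y, ‖φ n y‖ ≤ |y| := by
    intro n y
    rw [hφdef]
    simp only
    rw [norm_div]
    have h1 : Complex.I * ((vpt h n : ℝ) : ℂ) * (y : ℂ)
        = Complex.I * ((vpt h n * y : ℝ) : ℂ) := by push_cast; ring
    rw [h1]
    have h2 := aux_norm_exp_I_mul_sub_one (vpt h n * y)
    rw [abs_mul] at h2
    have h3 : ‖((vpt h n : ℝ) : ℂ)‖ = |vpt h n| := by
      rw [Complex.norm_real, Real.norm_eq_abs]
    rw [h3]
    have h4 : 0 < |vpt h n| := abs_pos.mpr (hv0 n)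
    rw [div_le_iff₀ h4]
    calc ‖Complex.exp (Complex.I * ((vpt h n * y : ℝ) : ℂ)) - 1‖
        ≤ |vpt h n| * |y| := h2
      _ = |y| * |vpt h n| := by ring
  have hφ_cont : ∀ n, Continuous (φ n) := by
    intro n
    apply Continuous.div_const
    apply Continuous.sub _ continuous_const
    apply Complex.continuous_exp.comp
    exact continuous_const.mul Complex.continuous_ofReal
  -- the family e m / E m
  set e : ℤ → ℝ → ℂ := fun m y =>
    (Real.sqrt h : ℂ) * Complex.exp (-(Complex.I * ((vpt h m : ℝ) : ℂ) * (y : ℂ))) with hedef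
  have he_cont : ∀ m, Continuous (e m) := by
    intro m
    apply continuous_const.mul
    apply Complex.continuous_exp.comp
    exact (continuous_const.mul Complex.continuous_ofReal).neg
  have he_norm : ∀ m y, ‖e m y‖ = Real.sqrt h := by
    intro m y
    rw [hedef]
    simp only
    rw [norm_mul, aux_norm_exp_neg, mul_one, Complex.norm_real, Real.norm_eq_abs,
      abs_of_nonneg (Real.sqrt_nonneg _)]
  have heMem : ∀ m, MemLp (e m) 2 μ := by
    intro m
    refine MemLp.of_bound ((he_cont m).aestronglyMeasurable) (Real.sqrt h) ?_
    filter_upwards with y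
    rw [he_norm]
  set E : ℤ → Lp ℂ 2 μ := fun m => (heMem m).toLp (e m) with hEdef
  -- orthonormality of E
  have hEorth : Orthonormal ℂ E := by
    rw [orthonormal_iff_ite]
    intro m m'
    have hinner : (inner ℂ (E m) (E m') : ℂ) = ∫ y, (starRingEnd ℂ) (e m y) * e m' y ∂μ := by
      rw [hEdef]
      simp only
      rw [MeasureTheory.L2.inner_def]
      apply integral_congr_ae
      filter_upwards [(heMem m).coeFn_toLp, (heMem m').coeFn_toLp] with y h1 h2
      rw [RCLike.inner_apply', h1, h2]
    have hptwise : ∀ y : ℝ, (starRingEnd ℂ) (e m y) * e m' y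
        = (h : ℂ) * Complex.exp (Complex.I * ((vpt h m - vpt h m' : ℝ) : ℂ) * (y : ℂ)) := by
      intro y
      rw [hedef]
      simp only [map_mul, Complex.conj_ofReal]
      rw [← Complex.exp_conj]
      have hconj : (starRingEnd ℂ) (-(Complex.I * ((vpt h m : ℝ) : ℂ) * (y : ℂ)))
          = Complex.I * ((vpt h m : ℝ) : ℂ) * (y : ℂ) := by
        simp only [map_neg, map_mul, Complex.conj_ofReal, Complex.conj_I]
        ring
      rw [hconj]
      rw [mul_mul_mul_comm, ← Complex.exp_add]
      have hsq : (Real.sqrt h : ℂ) * (Real.sqrt h : ℂ) = (h : ℂ) := by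
        rw [← Complex.ofReal_mul, Real.mul_self_sqrt hh.le]
      rw [hsq]
      congr 1
      push_cast
      ring
    rw [hinner, integral_congr_ae (Filter.Eventually.of_forall hptwise),
      integral_const_mul]
    have horth : (∫ y, Complex.exp (Complex.I * ((vpt h m - vpt h m' : ℝ) : ℂ) * (y:ℂ)) ∂μ)
        = if m = m' then ((1 / h : ℝ) : ℂ) else 0 := by
      rw [hμ, hS]
      exact aux_orth hh m m'
    rw [horth]
    by_cases hmm : m = m'
    · rw [if_pos hmm, if_pos hmm]
      rw [← Complex.ofReal_mul]
      norm_cast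
      field_simp
    · rw [if_neg hmm, if_neg hmm, mul_zero]
  -- the functions F n
  set F : ℤ → ℝ → ℂ := fun n y => (starRingEnd ℂ) (((D y : ℝ) : ℂ) * φ n y) with hFdef
  have hFmeas : ∀ n, AEStronglyMeasurable (F n) μ := by
    intro n
    apply Measurable.aestronglyMeasurable
    simp only [hFdef]
    exact Complex.continuous_conj.measurable.comp
      ((Complex.measurable_ofReal.comp hDm).mul (hφ_cont n).measurable)
  have hFnorm : ∀ n y, ‖F n y‖ = |D y| * ‖φ n y‖ := by
    intro n y
    rw [hFdef]
    simp only
    rw [RCLike.norm_conj, norm_mul, Complex.norm_real, Real.norm_eq_abs]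
  have hyS : ∀ᵐ y ∂μ, y ∈ S := by
    rw [hμ]; exact ae_restrict_mem hSmeas
  have hFb : ∀ n, ∀ᵐ y ∂μ, ‖F n y‖ ≤ 2 * c * (1 / (2 * h)) := by
    intro n
    filter_upwards [hyS] with y hy
    rw [hS, Set.mem_Icc] at hy
    have hay : |y| ≤ 1 / (2 * h) := abs_le.mpr hy
    rw [hFnorm]
    calc |D y| * ‖φ n y‖ ≤ (2 * c) * |y| := by
          apply mul_le_mul (hDb y) (hφ_bound n y) (norm_nonneg _) (by positivity)
      _ ≤ 2 * c * (1 / (2 * h)) := by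
          apply mul_le_mul_of_nonneg_left hay (by positivity)
  have hFMem : ∀ n, MemLp (F n) 2 μ := fun n =>
    MemLp.of_bound (hFmeas n) _ (hFb n)
  set FL : ℤ → Lp ℂ 2 μ := fun n => (hFMem n).toLp (F n) with hFLdef
  -- the integrals I' n m
  set I' : ℤ → ℤ → ℂ := fun n m => ∫ y,
      ((D y : ℝ) : ℂ) * Complex.exp (-(Complex.I * ((vpt h m : ℝ) : ℂ) * (y : ℂ))) * φ n y ∂μ
    with hI'def
  -- inner products
  have hinnerF : ∀ n m, (inner ℂ (E m) (FL n) : ℂ)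
      = (Real.sqrt h : ℂ) * (starRingEnd ℂ) (I' n m) := by
    intro n m
    have h1 : (inner ℂ (E m) (FL n) : ℂ) = ∫ y, (starRingEnd ℂ) (e m y) * F n y ∂μ := by
      rw [hEdef, hFLdef]
      simp only
      rw [MeasureTheory.L2.inner_def]
      apply integral_congr_ae
      filter_upwards [(heMem m).coeFn_toLp, (hFMem n).coeFn_toLp] with y h1 h2
      rw [RCLike.inner_apply', h1, h2]
    have h2 : ∀ y : ℝ, (starRingEnd ℂ) (e m y) * F n y
        = (Real.sqrt h : ℂ) * (starRingEnd ℂ)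
            (((D y : ℝ) : ℂ) * Complex.exp (-(Complex.I * ((vpt h m : ℝ) : ℂ) * (y : ℂ))) * φ n y) := by
      intro y
      rw [hedef, hFdef]
      simp only [map_mul, Complex.conj_ofReal]
      ring
    rw [h1, integral_congr_ae (Filter.Eventually.of_forall h2), integral_const_mul,
      integral_conj]
  have hinnerF_norm : ∀ n m, ‖(inner ℂ (E m) (FL n) : ℂ)‖ ^ 2 = h * ‖I' n m‖ ^ 2 := by
    intro n m
    rw [hinnerF, norm_mul, RCLike.norm_conj, Complex.norm_real, Real.norm_eq_abs,
      abs_of_nonneg (Real.sqrt_nonneg _), mul_pow, Real.sq_sqrt hh.le]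
  -- norm of FL n
  have hFLnorm : ∀ n, ‖FL n‖ ^ 2 = ∫ y, ‖F n y‖ ^ 2 ∂μ := by
    intro n
    rw [← inner_self_eq_norm_sq (𝕜 := ℂ) (FL n)]
    rw [MeasureTheory.L2.inner_def]
    rw [← integral_re (MeasureTheory.L2.integrable_inner (𝕜 := ℂ) (FL n) (FL n))]
    apply integral_congr_ae
    filter_upwards [(hFMem n).coeFn_toLp] with y h1
    rw [RCLike.inner_apply', h1]
    have : RCLike.re ((starRingEnd ℂ) (F n y) * F n y) = ‖F n y‖ ^ 2 := by
      rw [← RCLike.inner_apply' (𝕜 := ℂ)]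
      exact inner_self_eq_norm_sq _
    exact this
  -- integrability facts
  have hIntF2 : ∀ n, Integrable (fun y => ‖F n y‖ ^ 2) μ := by
    intro n
    rw [← memLp_one_iff_integrable]
    apply MemLp.of_bound (((hFmeas n).norm.mul (hFmeas n).norm).congr ?_)
      ((2 * c * (1 / (2 * h))) ^ 2) ?_
    · filter_upwards with y
      exact (pow_two _).symm
    · filter_upwards [hFb n] with y hy
      rw [Real.norm_eq_abs, abs_of_nonneg (sq_nonneg _), pow_two, pow_two]
      exact mul_le_mul hy hy (norm_nonneg _) (by positivity)
  have hIntyD : Integrable (fun y => y ^ 2 * (D y) ^ 2) μ := by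
    rw [← memLp_one_iff_integrable]
    apply MemLp.of_bound ?_ ((1 / (2 * h)) ^ 2 * (2 * c) ^ 2) ?_
    · exact ((measurable_id.pow_const 2).mul (hDm.pow_const 2)).aestronglyMeasurable
    · filter_upwards [hyS] with y hy
      rw [hS, Set.mem_Icc] at hy
      have hay : |y| ≤ 1 / (2 * h) := abs_le.mpr hy
      rw [Real.norm_eq_abs, abs_of_nonneg (by positivity)]
      apply mul_le_mul
      · calc y ^ 2 = |y| ^ 2 := (sq_abs y).symm
          _ ≤ (1 / (2 * h)) ^ 2 := by
              apply pow_le_pow_left₀ (abs_nonneg _) hay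
      · calc (D y) ^ 2 = |D y| ^ 2 := (sq_abs _).symm
          _ ≤ (2 * c) ^ 2 := by
              apply pow_le_pow_left₀ (abs_nonneg _) (hDb y)
      · positivity
      · positivity
  have hFle : ∀ n, (∫ y, ‖F n y‖ ^ 2 ∂μ) ≤ K := by
    intro n
    rw [hKD]
    apply integral_mono (hIntF2 n) hIntyD
    intro y
    show ‖F n y‖ ^ 2 ≤ y ^ 2 * (D y) ^ 2
    rw [hFnorm]
    calc (|D y| * ‖φ n y‖) ^ 2 ≤ (|D y| * |y|) ^ 2 := by
          apply pow_le_pow_left₀ (by positivity)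
          exact mul_le_mul_of_nonneg_left (hφ_bound n y) (abs_nonneg _)
      _ = y ^ 2 * (D y) ^ 2 := by
          rw [mul_pow, sq_abs, sq_abs]; ring
  -- Bessel
  have hIsummable : ∀ n, Summable fun m => ‖I' n m‖ ^ 2 := by
    intro n
    have h1 : Summable fun m => ‖(inner ℂ (E m) (FL n) : ℂ)‖ ^ 2 :=
      hEorth.inner_products_summable (FL n)
    have h2 : Summable fun m => h * ‖I' n m‖ ^ 2 := by
      apply h1.congr
      intro m
      exact hinnerF_norm n m
    have h3 := h2.div_const h
    apply h3.congr
    intro m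
    field_simp
  have hItsum : ∀ n, (∑' m, ‖I' n m‖ ^ 2) ≤ K / h := by
    intro n
    rw [le_div_iff₀ hh, mul_comm]
    calc h * ∑' m, ‖I' n m‖ ^ 2 = ∑' m, h * ‖I' n m‖ ^ 2 := by
          rw [tsum_mul_left]
      _ = ∑' m, ‖(inner ℂ (E m) (FL n) : ℂ)‖ ^ 2 := by
          apply tsum_congr
          intro m
          exact (hinnerF_norm n m).symm
      _ ≤ ‖FL n‖ ^ 2 := hEorth.tsum_inner_products_le (FL n)
      _ = ∫ y, ‖F n y‖ ^ 2 ∂μ := hFLnorm n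
      _ ≤ K := hFle n
  -- rewriting Bd
  have hBdEq : ∀ n : ℤ, Bd V x h g n = Complex.I * (h : ℂ) * ∑' m, g m * I' n m := by
    intro n
    rw [Bd]
    congr 1
    apply tsum_congr
    intro m
    congr 1
    rw [← hS, ← hμ, hI'def]
    simp only
    apply integral_congr_ae
    apply Filter.Eventually.of_forall
    intro y
    beta_reduce
    have hsplit : Complex.exp (Complex.I * ((vpt h n - vpt h m : ℝ) : ℂ) * (y : ℂ))
        = Complex.exp (Complex.I * ((vpt h n : ℝ) : ℂ) * (y : ℂ)) *
          Complex.exp (-(Complex.I * ((vpt h m : ℝ) : ℂ) * (y : ℂ))) := by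
      rw [← Complex.exp_add]
      congr 1
      push_cast
      ring
    rw [hsplit, hφdef]
    simp only
    have hDy : ((V (x + y / 2) - V (x - y / 2) : ℝ) : ℂ) = ((D y : ℝ) : ℂ) := rfl
    rw [hDy]
    ring
  -- pointwise bound on Bd
  have hBdle : ∀ n : ℤ, ‖Bd V x h g n‖ ^ 2 ≤ h * K * Sg := by
    intro n
    rw [hBdEq n]
    rw [norm_mul, norm_mul, Complex.norm_I, one_mul, Complex.norm_real, Real.norm_eq_abs,
      abs_of_pos hh]
    have hgnorm : ∀ m : ℤ, (0:ℝ) ≤ ‖g m‖ := fun m => norm_nonneg _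
    have hsummul : Summable fun m => ‖g m‖ * ‖I' n m‖ := by
      apply Summable.of_nonneg_of_le (fun m => mul_nonneg (hgnorm m) (norm_nonneg _))
        (fun m => ?_) ((hgsum.add (hIsummable n)).div_const 2)
      have h5 := sq_nonneg (‖g m‖ - ‖I' n m‖)
      calc ‖g m‖ * ‖I' n m‖ ≤ (‖g m‖ ^ 2 + ‖I' n m‖ ^ 2) / 2 := by nlinarith
        _ = _ := by simp [Pi.add_apply]
    have h5 : ‖∑' m, g m * I' n m‖ ≤ Real.sqrt Sg * Real.sqrt (K / h) := by
      calc ‖∑' m, g m * I' n m‖ ≤ ∑' m, ‖g m * I' n m‖ := by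
            apply norm_tsum_le_tsum_norm
            apply hsummul.congr
            intro m
            rw [norm_mul]
          _ = ∑' m, ‖g m‖ * ‖I' n m‖ := by
            apply tsum_congr
            intro m
            rw [norm_mul]
          _ ≤ Real.sqrt (∑' m, ‖g m‖ ^ 2) * Real.sqrt (∑' m, ‖I' n m‖ ^ 2) :=
            aux_tsum_CS hgnorm (fun m => norm_nonneg _) hgsum (hIsummable n)
          _ ≤ Real.sqrt Sg * Real.sqrt (K / h) := by
            apply mul_le_mul
            · rw [hSg]
            · exact Real.sqrt_le_sqrt (hItsum n)
            · exact Real.sqrt_nonneg _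
            · exact Real.sqrt_nonneg _
    calc (h * ‖∑' m, g m * I' n m‖) ^ 2
        ≤ (h * (Real.sqrt Sg * Real.sqrt (K / h))) ^ 2 := by
          apply pow_le_pow_left₀ (by positivity)
          exact mul_le_mul_of_nonneg_left h5 hh.le
      _ = h ^ 2 * (Sg * (K / h)) := by
          rw [mul_pow, mul_pow, Real.sq_sqrt hSg0, Real.sq_sqrt (by positivity)]
      _ = h * K * Sg := by
          field_simp
  -- counting the low-velocity indices
  set lo : ℤ := ⌈(-(1 / (π * h)) - 1) / 2⌉ with hlo
  set hi : ℤ := ⌊(1 / (π * h) - 1) / 2⌋ with hhi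
  have hπh : 0 < π * h := by positivity
  have hsub : ∀ n : ℤ, |vpt h n| ≤ 1 → n ∈ Finset.Icc lo hi := by
    intro n hn
    have h1 : |vpt h n| = |2 * (n:ℝ) + 1| * (π * h) := by
      rw [vpt, abs_mul, abs_mul, abs_of_pos hπ, abs_of_pos hh]
      ring
    rw [h1] at hn
    have h2 : |2 * (n:ℝ) + 1| ≤ 1 / (π * h) := by
      rw [le_div_iff₀ hπh]
      exact hn
    rw [abs_le] at h2
    rw [Finset.mem_Icc]
    constructor
    · rw [hlo]
      apply Int.ceil_le.mpr
      have := h2.1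
      push_cast
      linarith
    · rw [hhi]
      apply Int.le_floor.mpr
      have := h2.2
      push_cast
      linarith
  have hTfin : Set.Finite {n : ℤ | |vpt h n| ≤ 1} := by
    apply Set.Finite.subset (Finset.Icc lo hi).finite_toSet
    intro n hn
    exact hsub n hn
  haveI hFt : Fintype {n : ℤ // |vpt h n| ≤ 1} := Set.Finite.fintype hTfin
  rw [tsum_fintype]
  have hterm : ∀ n : {n : ℤ // |vpt h n| ≤ 1}, ‖Bd V x h g (n : ℤ)‖ ^ 2 ≤ h * K * Sg :=
    fun n => hBdle n
  have hsum1 : (∑ n : {n : ℤ // |vpt h n| ≤ 1}, ‖Bd V x h g (n : ℤ)‖ ^ 2)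
      ≤ (Fintype.card {n : ℤ // |vpt h n| ≤ 1}) • (h * K * Sg) := by
    have := Finset.sum_le_card_nsmul Finset.univ
      (fun n : {n : ℤ // |vpt h n| ≤ 1} => ‖Bd V x h g (n : ℤ)‖ ^ 2) (h * K * Sg)
      (fun n _ => hterm n)
    simpa using this
  have hcardN : Fintype.card {n : ℤ // |vpt h n| ≤ 1} ≤ (Finset.Icc lo hi).card := by
    rw [← Fintype.card_coe (Finset.Icc lo hi)]
    apply Fintype.card_le_of_injective
      (fun p : {n : ℤ // |vpt h n| ≤ 1} =>
        (⟨p.1, hsub p.1 p.2⟩ : {m : ℤ // m ∈ Finset.Icc lo hi}))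
    intro p q hpq
    have h11 : ((⟨p.1, hsub p.1 p.2⟩ : {m : ℤ // m ∈ Finset.Icc lo hi}) : ℤ)
        = ((⟨q.1, hsub q.1 q.2⟩ : {m : ℤ // m ∈ Finset.Icc lo hi}) : ℤ) :=
      congrArg Subtype.val hpq
    simp only at h11
    exact Subtype.ext h11
  have h5 : ((hi + 1 - lo).toNat : ℝ) ≤ 1 / (π * h) + 1 := by
    rcases le_or_gt (hi + 1 - lo) 0 with h6 | h6
    · rw [Int.toNat_of_nonpos h6]
      norm_num
      positivity
    · have h9 : (((hi + 1 - lo).toNat : ℤ) : ℝ) = ((hi + 1 - lo : ℤ) : ℝ) := by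
        rw [Int.toNat_of_nonneg h6.le]
      have h7 : (hi : ℝ) ≤ (1 / (π * h) - 1) / 2 := Int.floor_le _
      have h8 : (-(1 / (π * h)) - 1) / 2 ≤ (lo : ℝ) := Int.le_ceil _
      have h10 : (((hi + 1 - lo).toNat : ℕ) : ℝ) = (((hi + 1 - lo).toNat : ℤ) : ℝ) := by
        push_cast
        ring
      rw [h10, h9]
      push_cast
      linarith
  have hcard : ((Fintype.card {n : ℤ // |vpt h n| ≤ 1}) : ℝ) ≤ 1 / (π * h) + 1 := by
    calc ((Fintype.card {n : ℤ // |vpt h n| ≤ 1}) : ℝ)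
        ≤ ((Finset.Icc lo hi).card : ℝ) := by exact_mod_cast hcardN
      _ = ((hi + 1 - lo).toNat : ℝ) := by rw [Int.card_Icc]
      _ ≤ 1 / (π * h) + 1 := h5
  have hfinal : ((Fintype.card {n : ℤ // |vpt h n| ≤ 1}) : ℝ) * (h * K * Sg)
      ≤ (1 / π + h) * K * Sg := by
    have h1 : ((Fintype.card {n : ℤ // |vpt h n| ≤ 1}) : ℝ) * (h * K * Sg)
        ≤ (1 / (π * h) + 1) * (h * K * Sg) := by
      apply mul_le_mul_of_nonneg_right hcard (by positivity)
    calc ((Fintype.card {n : ℤ // |vpt h n| ≤ 1}) : ℝ) * (h * K * Sg)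
        ≤ (1 / (π * h) + 1) * (h * K * Sg) := h1
      _ = (1 / π + h) * K * Sg := by
        field_simp
  calc (∑ n : {n : ℤ // |vpt h n| ≤ 1}, ‖Bd V x h g (n : ℤ)‖ ^ 2)
      ≤ (Fintype.card {n : ℤ // |vpt h n| ≤ 1}) • (h * K * Sg) := hsum1
    _ = ((Fintype.card {n : ℤ // |vpt h n| ≤ 1}) : ℝ) * (h * K * Sg) := by
        rw [nsmul_eq_mul]
    _ ≤ (1 / π + h) * K * Sg := hfinal
end

section
/- There exists an absolute constant C₂ > 0 with the following property. Let V : ℝ → ℝ be bounded measurable, fix x ∈ ℝ, and suppose D_V ∈ L²(ℝ). For every h > 0, with v_n = (2n+1)πh and (B_d g)_n = i h Σ_{m∈ℤ} g_m ∫_{−1/(2h)}^{1/(2h)} D_V(y)·(e^{i(v_n − v_m)y} − e^{−i v_m y})/v_n dy, the sum over the high-velocity indices satisfies Σ_{n∈ℤ, |(2n+1)πh| > 1} |(B_d g)_n|² ≤ C₂·‖D_V‖²_{L²(ℝ)}·‖g‖²_{ℓ²(ℤ)} for all g ∈ ℓ²(ℤ). -/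
open MeasureTheory Real

set_option maxHeartbeats 1000000 in
lemma tsum_cs {f g : ℤ → ℝ} (hf : ∀ n, 0 ≤ f n) (hg : ∀ n, 0 ≤ g n)
    (hf2 : Summable fun n => f n ^ 2) (hg2 : Summable fun n => g n ^ 2) :
    ∑' n, f n * g n ≤ Real.sqrt (∑' n, f n ^ 2) * Real.sqrt (∑' n, g n ^ 2) := by
  refine tsum_le_of_sum_le' (mul_nonneg (Real.sqrt_nonneg _) (Real.sqrt_nonneg _)) fun s => ?_
  have h1 : (∑ n ∈ s, f n * g n) ^ 2 ≤ (∑ n ∈ s, f n ^ 2) * ∑ n ∈ s, g n ^ 2 :=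
    Finset.sum_mul_sq_le_sq_mul_sq s f g
  have h2 : ∑ n ∈ s, f n * g n ≤
      Real.sqrt (∑ n ∈ s, f n ^ 2) * Real.sqrt (∑ n ∈ s, g n ^ 2) := by
    rw [← Real.sqrt_mul (Finset.sum_nonneg fun i _ => sq_nonneg _)]
    rw [show (∑ n ∈ s, f n * g n) = Real.sqrt ((∑ n ∈ s, f n * g n) ^ 2) from
      (Real.sqrt_sq (Finset.sum_nonneg fun i _ => mul_nonneg (hf i) (hg i))).symm]
    exact Real.sqrt_le_sqrt h1
  refine h2.trans (mul_le_mul ?_ ?_ (Real.sqrt_nonneg _) (Real.sqrt_nonneg _))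
  · exact Real.sqrt_le_sqrt (hf2.sum_le_tsum s (fun i _ => sq_nonneg _))
  · exact Real.sqrt_le_sqrt (hg2.sum_le_tsum s (fun i _ => sq_nonneg _))


set_option maxHeartbeats 1000000 in
lemma vel_sum_nat {a : ℝ} (ha : 0 < a) (t : Finset ℕ) (ht : ∀ k ∈ t, 1 < (2 * (k : ℝ) + 1) * a) :
    ∑ k ∈ t, 1 / ((2 * (k : ℝ) + 1) * a) ^ 2 ≤ 3 / a := by
  set g : ℕ → ℝ := fun k => min 1 (1 / ((2 * (k : ℝ) + 1) * a)) with hg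
  have hpos : ∀ k : ℕ, 0 < (2 * (k : ℝ) + 1) * a := fun k => by positivity
  have hganti : ∀ k, g (k + 1) ≤ g k := by
    intro k
    refine min_le_min le_rfl (one_div_le_one_div_of_le (hpos k) ?_)
    have : (2 * ((k : ℝ) + 1) + 1) = 2 * (k : ℝ) + 3 := by ring
    push_cast
    nlinarith [ha.le]
  have hgnonneg : ∀ k, 0 ≤ g k := fun k => le_min zero_le_one (by positivity)
  have hpt : ∀ k ∈ t, 1 / ((2 * (k : ℝ) + 1) * a) ^ 2 ≤ (3 / a) * (g k - g (k + 1)) := by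
    intro k hk
    have h1 : 1 < (2 * (k : ℝ) + 1) * a := ht k hk
    have h2 : 1 < (2 * (k : ℝ) + 3) * a := by nlinarith [ha.le]
    have e1 : g k = 1 / ((2 * (k : ℝ) + 1) * a) :=
      min_eq_right (le_of_lt ((div_lt_one (hpos k)).mpr h1))
    have e2 : g (k + 1) = 1 / ((2 * (k : ℝ) + 3) * a) := by
      have : (2 * ((k : ℝ) + 1) + 1) = 2 * (k : ℝ) + 3 := by ring
      rw [hg]
      push_cast
      rw [this]
      exact min_eq_right (le_of_lt ((div_lt_one (by nlinarith [ha.le])).mpr h2))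
    rw [e1, e2]
    have hp1 : (0:ℝ) < (2 * (k : ℝ) + 1) * a := hpos k
    have hp2 : (0:ℝ) < (2 * (k : ℝ) + 3) * a := by nlinarith [ha.le]
    have hk0 : (0:ℝ) ≤ (k : ℝ) := Nat.cast_nonneg k
    have hQP : (2 * (k : ℝ) + 3) * a - (2 * (k : ℝ) + 1) * a = 2 * a := by ring
    rw [div_sub_div _ _ hp1.ne' hp2.ne', one_mul, mul_one, hQP, div_mul_div_comm,
      div_le_div_iff₀ (by positivity) (by positivity)]
    have key : 3 * (2*a) * ((2*(k:ℝ)+1)*a)^2 - 1 * (a * ((2*(k:ℝ)+1)*a*((2*(k:ℝ)+3)*a)))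
        = a*a*a*(2*(k:ℝ)+1)*(10*(k:ℝ)+3) := by ring
    have hnn : 0 ≤ a*a*a*(2*(k:ℝ)+1)*(10*(k:ℝ)+3) := by positivity
    linarith
  calc ∑ k ∈ t, 1 / ((2 * (k : ℝ) + 1) * a) ^ 2
      ≤ ∑ k ∈ t, (3 / a) * (g k - g (k + 1)) := Finset.sum_le_sum hpt
    _ ≤ ∑ k ∈ Finset.range (t.sup id + 1), (3 / a) * (g k - g (k + 1)) := by
        refine Finset.sum_le_sum_of_subset_of_nonneg ?_ ?_
        · intro k hk
          exact Finset.mem_range.mpr (Nat.lt_succ_of_le (Finset.le_sup (f := id) hk))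
        · intro k _ _
          have := hganti k
          have h3 : (0:ℝ) ≤ 3 / a := by positivity
          nlinarith
    _ = (3 / a) * (g 0 - g (t.sup id + 1)) := by
        rw [← Finset.mul_sum, Finset.sum_range_sub' g]
    _ ≤ (3 / a) * 1 := by
        have h3 : (0:ℝ) ≤ 3 / a := by positivity
        have := hgnonneg (t.sup id + 1)
        have hg0 : g 0 ≤ 1 := min_le_left _ _
        nlinarith
    _ = 3 / a := mul_one _

set_option maxHeartbeats 1000000 in
lemma vel_sum {a : ℝ} (ha : 0 < a) (s : Finset ℤ)
    (hs : ∀ n ∈ s, 1 < |(2 * (n : ℝ) + 1) * a|) :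
    ∑ n ∈ s, 1 / ((2 * (n : ℝ) + 1) * a) ^ 2 ≤ 6 / a := by
  classical
  have hsplit := Finset.sum_filter_add_sum_filter_not s (fun n => 0 ≤ n)
    (fun n : ℤ => 1 / ((2 * (n : ℝ) + 1) * a) ^ 2)
  set s₁ := s.filter (fun n => 0 ≤ n) with hs₁
  set s₂ := s.filter (fun n => ¬ 0 ≤ n) with hs₂
  have h₁ : ∑ n ∈ s₁, 1 / ((2 * (n : ℝ) + 1) * a) ^ 2 ≤ 3 / a := by
    have hinj : ∀ x ∈ s₁, ∀ y ∈ s₁, x.toNat = y.toNat → x = y := by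
      intro x hx y hy hxy
      have hx0 : 0 ≤ x := (Finset.mem_filter.mp hx).2
      have hy0 : 0 ≤ y := (Finset.mem_filter.mp hy).2
      omega
    have himg : ∑ k ∈ s₁.image Int.toNat, 1 / ((2 * (k : ℝ) + 1) * a) ^ 2
        = ∑ n ∈ s₁, 1 / ((2 * (n : ℝ) + 1) * a) ^ 2 := by
      rw [Finset.sum_image hinj]
      refine Finset.sum_congr rfl fun n hn => ?_
      have hn0 : 0 ≤ n := (Finset.mem_filter.mp hn).2
      have hc : ((n.toNat : ℝ)) = (n : ℝ) := by
        exact_mod_cast congrArg (Int.cast : ℤ → ℝ) (Int.toNat_of_nonneg hn0)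
      rw [hc]
    rw [← himg]
    refine vel_sum_nat ha _ ?_
    intro k hk
    obtain ⟨n, hn, rfl⟩ := Finset.mem_image.mp hk
    have hn0 : 0 ≤ n := (Finset.mem_filter.mp hn).2
    have habs := hs n (Finset.mem_filter.mp hn).1
    have hc : ((n.toNat : ℝ)) = (n : ℝ) := by
      exact_mod_cast congrArg (Int.cast : ℤ → ℝ) (Int.toNat_of_nonneg hn0)
    rw [hc]
    have hpos : 0 < (2 * (n : ℝ) + 1) * a := by
      have : (0:ℝ) ≤ (n : ℝ) := by exact_mod_cast hn0
      positivity
    rwa [abs_of_pos hpos] at habs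
  have h₂ : ∑ n ∈ s₂, 1 / ((2 * (n : ℝ) + 1) * a) ^ 2 ≤ 3 / a := by
    have hinj : ∀ x ∈ s₂, ∀ y ∈ s₂, (-1 - x).toNat = (-1 - y).toNat → x = y := by
      intro x hx y hy hxy
      have hx0 : ¬ 0 ≤ x := (Finset.mem_filter.mp hx).2
      have hy0 : ¬ 0 ≤ y := (Finset.mem_filter.mp hy).2
      omega
    have himg : ∑ k ∈ (s₂.image (fun n => (-1 - n).toNat) : Finset ℕ), 1 / ((2 * (k : ℝ) + 1) * a) ^ 2
        = ∑ n ∈ s₂, 1 / ((2 * (n : ℝ) + 1) * a) ^ 2 := by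
      rw [Finset.sum_image hinj]
      refine Finset.sum_congr rfl fun n hn => ?_
      have hn0 : ¬ 0 ≤ n := (Finset.mem_filter.mp hn).2
      have hc : (((-1 - n).toNat : ℝ)) = -1 - (n : ℝ) := by
        have h' : (0:ℤ) ≤ -1 - n := by omega
        exact_mod_cast congrArg (Int.cast : ℤ → ℝ) (Int.toNat_of_nonneg h')
      rw [hc]
      ring_nf
    rw [← himg]
    refine vel_sum_nat ha _ ?_
    intro k hk
    obtain ⟨n, hn, rfl⟩ := Finset.mem_image.mp hk
    have hn0 : ¬ 0 ≤ n := (Finset.mem_filter.mp hn).2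
    have habs := hs n (Finset.mem_filter.mp hn).1
    have hc : (((-1 - n).toNat : ℝ)) = -1 - (n : ℝ) := by
      have h' : (0:ℤ) ≤ -1 - n := by omega
      exact_mod_cast congrArg (Int.cast : ℤ → ℝ) (Int.toNat_of_nonneg h')
    rw [hc]
    have hneg : (2 * (n : ℝ) + 1) * a < 0 := by
      have : (n : ℝ) ≤ -1 := by exact_mod_cast (by omega : n ≤ -1)
      nlinarith
    rw [abs_of_neg hneg] at habs
    have heq : (2 * (-1 - (n:ℝ)) + 1) * a = -((2 * (n : ℝ) + 1) * a) := by ring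
    rw [heq]
    exact habs
  have h6 : 3 / a + 3 / a = 6 / a := by ring
  linarith [hsplit, h₁, h₂]

set_option maxHeartbeats 1000000 in
lemma bessel {b : ℝ} (hb : 0 < b) (f : ℝ → ℂ) (hmf : Measurable f) {C : ℝ}
    (hC : ∀ y, ‖f y‖ ≤ C) :
    Summable (fun k : ℤ =>
      ‖∫ y in Set.Ioc (-b) b,
        f y * Complex.exp (Complex.I * ((π * (k : ℝ) / b : ℝ) : ℂ) * (y : ℂ))‖ ^ 2) ∧
    ∑' k : ℤ, ‖∫ y in Set.Ioc (-b) b,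
        f y * Complex.exp (Complex.I * ((π * (k : ℝ) / b : ℝ) : ℂ) * (y : ℂ))‖ ^ 2
      ≤ (2 * b) * ∫ y in Set.Ioc (-b) b, ‖f y‖ ^ 2 := by
  set T : ℝ := 2 * b with hTdef
  have hT : 0 < T := by positivity
  haveI hTfact : Fact (0 < T) := ⟨hT⟩
  have hab : -b + T = b := by rw [hTdef]; ring
  set F : AddCircle T → ℂ := AddCircle.liftIoc T (-b) f with hFdef
  have hFmeas : Measurable F :=
    (hmf.comp measurable_subtype_coe).comp (AddCircle.measurableEquivIoc T (-b)).measurable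
  have hFbd : ∀ z, ‖F z‖ ≤ C := fun z => hC _
  have hFmem : MemLp F 2 (@AddCircle.haarAddCircle T hTfact) :=
    (memLp_top_of_bound hFmeas.aestronglyMeasurable C
      (Filter.Eventually.of_forall hFbd)).mono_exponent le_top
  set L : Lp ℂ 2 (@AddCircle.haarAddCircle T hTfact) := hFmem.toLp F with hLdef
  have hLae : (L : AddCircle T → ℂ) =ᵐ[@AddCircle.haarAddCircle T hTfact] F :=
    hFmem.coeFn_toLp
  have hcoeff : ∀ i : ℤ, fourierCoeff (L : AddCircle T → ℂ) i = fourierCoeff F i := by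
    intro i
    unfold fourierCoeff
    refine integral_congr_ae ?_
    filter_upwards [hLae] with t ht
    rw [ht]
  have hsum0 : Summable fun i : ℤ => ‖fourierCoeff (L : AddCircle T → ℂ) i‖ ^ 2 := by
    have hmem := lp.memℓp (fourierBasis.repr L)
    have hs := hmem.summable (p := 2) (by norm_num)
    refine hs.congr fun i => ?_
    rw [fourierBasis_repr]
    rw [show ((2 : ENNReal).toReal) = ((2 : ℕ) : ℝ) by norm_num, Real.rpow_natCast]
  have hpars := tsum_sq_fourierCoeff L
  -- value of the haar integral
  have hint : ∫ t : AddCircle T, ‖(L : AddCircle T → ℂ) t‖ ^ 2 ∂AddCircle.haarAddCircle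
      = (1 / T) * ∫ y in Set.Ioc (-b) b, ‖f y‖ ^ 2 := by
    have h1 : ∫ t : AddCircle T, ‖(L : AddCircle T → ℂ) t‖ ^ 2 ∂AddCircle.haarAddCircle
        = ∫ t : AddCircle T, ‖F t‖ ^ 2 ∂AddCircle.haarAddCircle := by
      refine integral_congr_ae ?_
      filter_upwards [hLae] with t ht
      rw [ht]
    have h2 : ∫ t : AddCircle T, ‖F t‖ ^ 2 ∂(volume : Measure (AddCircle T))
        = T * ∫ t : AddCircle T, ‖F t‖ ^ 2 ∂AddCircle.haarAddCircle := by
      rw [AddCircle.volume_eq_smul_haarAddCircle, integral_smul_measure,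
        ENNReal.toReal_ofReal hT.le, smul_eq_mul]
    have h3 : ∫ t : AddCircle T, ‖F t‖ ^ 2 ∂(volume : Measure (AddCircle T))
        = ∫ y in Set.Ioc (-b) (-b + T), ‖F (y : AddCircle T)‖ ^ 2 :=
      (AddCircle.integral_preimage T (-b) _).symm
    have h4 : ∫ y in Set.Ioc (-b) (-b + T), ‖F (y : AddCircle T)‖ ^ 2
        = ∫ y in Set.Ioc (-b) b, ‖f y‖ ^ 2 := by
      rw [hab]
      refine setIntegral_congr_fun measurableSet_Ioc fun y hy => ?_
      rw [hFdef, AddCircle.liftIoc_coe_apply (by rwa [hab])]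
    rw [h1]
    have h5 : ∫ t : AddCircle T, ‖F t‖ ^ 2 ∂AddCircle.haarAddCircle
        = (1 / T) * ∫ t : AddCircle T, ‖F t‖ ^ 2 ∂(volume : Measure (AddCircle T)) := by
      rw [h2, ← mul_assoc, one_div_mul_cancel hT.ne', one_mul]
    rw [h5, h3, h4]
  -- coefficient identity
  have hcoeff2 : ∀ k : ℤ,
      (∫ y in Set.Ioc (-b) b,
        f y * Complex.exp (Complex.I * ((π * (k : ℝ) / b : ℝ) : ℂ) * (y : ℂ)))
      = (T : ℂ) * fourierCoeff F (-k) := by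
    intro k
    have hbne : (b : ℂ) ≠ 0 := Complex.ofReal_ne_zero.mpr hb.ne'
    rw [fourierCoeff_eq_intervalIntegral F (-k) (-b), Complex.real_smul, ← mul_assoc,
      ← Complex.ofReal_mul, mul_one_div_cancel hT.ne', Complex.ofReal_one, one_mul,
      intervalIntegral.integral_of_le (by linarith : -b ≤ -b + T), hab, neg_neg]
    refine setIntegral_congr_fun measurableSet_Ioc fun y hy => ?_
    rw [hFdef, AddCircle.liftIoc_coe_apply (by rw [hab]; exact hy), smul_eq_mul, mul_comm]
    congr 1
    rw [fourier_coe_apply]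
    congr 1
    rw [hTdef]
    push_cast
    field_simp
  have hTnorm : ‖(T : ℂ)‖ = T := by
    rw [Complex.norm_real]
    exact abs_of_pos hT
  have hnorm : ∀ k : ℤ,
      ‖∫ y in Set.Ioc (-b) b,
        f y * Complex.exp (Complex.I * ((π * (k : ℝ) / b : ℝ) : ℂ) * (y : ℂ))‖ ^ 2
      = T ^ 2 * ‖fourierCoeff F (-k)‖ ^ 2 := by
    intro k
    rw [hcoeff2 k, norm_mul, mul_pow, hTnorm]
  have hsumF : Summable fun i : ℤ => ‖fourierCoeff F i‖ ^ 2 :=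
    hsum0.congr fun i => by rw [hcoeff]
  have hsneg : Summable fun k : ℤ => ‖fourierCoeff F (-k)‖ ^ 2 :=
    (Equiv.neg ℤ).summable_iff.mpr hsumF
  constructor
  · exact (hsneg.mul_left (T ^ 2)).congr fun k => (hnorm k).symm
  · have hveq : ∑' k : ℤ, ‖∫ y in Set.Ioc (-b) b,
        f y * Complex.exp (Complex.I * ((π * (k : ℝ) / b : ℝ) : ℂ) * (y : ℂ))‖ ^ 2
        = T * ∫ y in Set.Ioc (-b) b, ‖f y‖ ^ 2 := by
      calc ∑' k : ℤ, ‖∫ y in Set.Ioc (-b) b,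
            f y * Complex.exp (Complex.I * ((π * (k : ℝ) / b : ℝ) : ℂ) * (y : ℂ))‖ ^ 2
          = ∑' k : ℤ, T ^ 2 * ‖fourierCoeff F (-k)‖ ^ 2 := tsum_congr hnorm
        _ = T ^ 2 * ∑' k : ℤ, ‖fourierCoeff F (-k)‖ ^ 2 := tsum_mul_left
        _ = T ^ 2 * ∑' i : ℤ, ‖fourierCoeff F i‖ ^ 2 := by
            congr 1
            simpa [Equiv.neg_apply] using
              (Equiv.neg ℤ).tsum_eq (fun i => ‖fourierCoeff F i‖ ^ 2)
        _ = T ^ 2 * ∑' i : ℤ, ‖fourierCoeff (L : AddCircle T → ℂ) i‖ ^ 2 := by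
            congr 1
            exact (tsum_congr fun i => by rw [hcoeff]).symm
        _ = T ^ 2 * ((1 / T) * ∫ y in Set.Ioc (-b) b, ‖f y‖ ^ 2) := by
            rw [hpars, hint]
        _ = T * ∫ y in Set.Ioc (-b) b, ‖f y‖ ^ 2 := by
            field_simp
    exact le_of_eq hveq

set_option maxHeartbeats 1000000 in
/-- There is an absolute constant `C₂ > 0` such that for
every bounded measurable `V` and every `x` with `D_V ∈ L²(ℝ)`, every `h > 0`
and every `g ∈ ℓ²(ℤ)`, the high-velocity part satisfies
`Σ_{|(2n+1)πh| > 1} |(B_d g)_n|² ≤ C₂ ‖D_V‖²_{L²(ℝ)} ‖g‖²_{ℓ²}`. -/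
theorem stmt15 :
    ∃ C₂ : ℝ, 0 < C₂ ∧
      ∀ (V : ℝ → ℝ), Measurable V → (∃ c : ℝ, ∀ t : ℝ, |V t| ≤ c) →
        ∀ x : ℝ,
          MemLp (fun y : ℝ => V (x + y / 2) - V (x - y / 2)) 2
            (volume : Measure ℝ) →
          ∀ h : ℝ, 0 < h → ∀ g : ℤ → ℂ, Memℓp g 2 →
            ∑' n : {n : ℤ // 1 < |vpt h n|}, ‖Bd V x h g (n : ℤ)‖ ^ 2 ≤
              C₂ * (∫ y : ℝ, (V (x + y / 2) - V (x - y / 2)) ^ 2) *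
                ∑' m : ℤ, ‖g m‖ ^ 2 := by
  refine ⟨8, by norm_num, ?_⟩
  rintro V hV ⟨c, hc⟩ x hD2 h hh g hg
  set D : ℝ → ℝ := fun y => V (x + y / 2) - V (x - y / 2) with hDdef
  have hDmeas : Measurable D := by
    have h1 : Measurable fun y : ℝ => x + y / 2 := by measurability
    have h2 : Measurable fun y : ℝ => x - y / 2 := by measurability
    exact (hV.comp h1).sub (hV.comp h2)
  have hDbd : ∀ y, |D y| ≤ c + c := fun y =>
    (abs_sub _ _).trans (add_le_add (hc _) (hc _))
  set b : ℝ := 1 / (2 * h) with hbdef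
  have hb : 0 < b := by positivity
  set K : ℝ := ∫ y : ℝ, (D y) ^ 2 with hKdef
  have hKint : Integrable (fun y => (D y) ^ 2) volume := by
    have := hD2.integrable_sq
    exact this
  have hK0 : 0 ≤ K := integral_nonneg fun y => sq_nonneg _
  set G : ℝ := ∑' m : ℤ, ‖g m‖ ^ 2 with hGdef
  have hGsum : Summable fun m : ℤ => ‖g m‖ ^ 2 := by
    have hs := hg.summable (p := 2) (by norm_num)
    refine hs.congr fun i => ?_
    rw [show ((2 : ENNReal).toReal) = ((2 : ℕ) : ℝ) by norm_num, Real.rpow_natCast]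
  have hG0 : 0 ≤ G := tsum_nonneg fun m => sq_nonneg _
  -- the two auxiliary functions
  set f₁ : ℝ → ℂ := fun y => ((D y : ℝ) : ℂ) with hf₁def
  set f₂ : ℝ → ℂ := fun y =>
    ((D y : ℝ) : ℂ) * Complex.exp (Complex.I * ((-(π * h) : ℝ) : ℂ) * (y : ℂ)) with hf₂def
  have hexp1 : ∀ (r y : ℝ), ‖Complex.exp (Complex.I * (r : ℂ) * (y : ℂ))‖ = 1 := by
    intro r y
    rw [Complex.norm_exp]
    simp [Complex.mul_re]
  have hm1 : Measurable f₁ := Complex.measurable_ofReal.comp hDmeas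
  have hcont2 : ∀ r : ℝ, Continuous fun y : ℝ =>
      Complex.exp (Complex.I * ((r : ℝ) : ℂ) * (y : ℂ)) := by
    intro r
    exact Complex.continuous_exp.comp (continuous_const.mul Complex.continuous_ofReal)
  have hm2 : Measurable f₂ := hm1.mul ((hcont2 (-(π * h))).measurable)
  have hb1 : ∀ y, ‖f₁ y‖ ≤ c + c := fun y => by
    rw [hf₁def]
    simpa [Complex.norm_real] using hDbd y
  have hb2 : ∀ y, ‖f₂ y‖ ≤ c + c := fun y => by
    rw [hf₂def]
    simp only [norm_mul, hexp1, mul_one]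
    simpa [Complex.norm_real] using hDbd y
  have bes1 := bessel hb f₁ hm1 hb1
  have bes2 := bessel hb f₂ hm2 hb2
  set BB1 : ℤ → ℂ := fun k => ∫ y in Set.Ioc (-b) b,
    f₁ y * Complex.exp (Complex.I * ((π * (k : ℝ) / b : ℝ) : ℂ) * (y : ℂ)) with hBB1def
  set BB2 : ℤ → ℂ := fun k => ∫ y in Set.Ioc (-b) b,
    f₂ y * Complex.exp (Complex.I * ((π * (k : ℝ) / b : ℝ) : ℂ) * (y : ℂ)) with hBB2def
  -- L² bounds for the coefficients
  have hIocK : ∀ f : ℝ → ℂ, (∀ y, ‖f y‖ = |D y|) →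
      (2 * b) * ∫ y in Set.Ioc (-b) b, ‖f y‖ ^ 2 ≤ (1 / h) * K := by
    intro f hf
    have h2b : 2 * b = 1 / h := by rw [hbdef]; field_simp
    have heq : ∫ y in Set.Ioc (-b) b, ‖f y‖ ^ 2 = ∫ y in Set.Ioc (-b) b, (D y) ^ 2 := by
      refine setIntegral_congr_fun measurableSet_Ioc fun y _ => ?_
      rw [hf y, sq_abs]
    have hle : ∫ y in Set.Ioc (-b) b, (D y) ^ 2 ≤ K := by
      rw [hKdef]
      exact setIntegral_le_integral hKint (Filter.Eventually.of_forall fun y => sq_nonneg _)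
    rw [h2b, heq]
    have : 0 < 1 / h := by positivity
    exact mul_le_mul_of_nonneg_left hle this.le
  have hSB1 : ∑' k : ℤ, ‖BB1 k‖ ^ 2 ≤ (1 / h) * K :=
    bes1.2.trans (hIocK f₁ fun y => by rw [hf₁def]; exact Complex.norm_real _)
  have hSB2 : ∑' k : ℤ, ‖BB2 k‖ ^ 2 ≤ (1 / h) * K := by
    refine bes2.2.trans (hIocK f₂ fun y => ?_)
    rw [hf₂def]
    simp only [norm_mul, hexp1, mul_one]
    exact Complex.norm_real _
  have hM0 : 0 ≤ (1 / h) * K := by positivity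
  set R : ℝ := Real.sqrt G * Real.sqrt ((1 / h) * K) with hRdef
  have hR0 : 0 ≤ R := mul_nonneg (Real.sqrt_nonneg _) (Real.sqrt_nonneg _)
  have hRsq : R ^ 2 = G * ((1 / h) * K) := by
    rw [hRdef, mul_pow, Real.sq_sqrt hG0, Real.sq_sqrt hM0]
  -- frequency identities
  have hfreq1 : ∀ n m : ℤ, π * (((n - m : ℤ) : ℝ)) / b = vpt h n - vpt h m := by
    intro n m
    rw [hbdef, vpt, vpt]
    push_cast
    field_simp
    ring
  have hfreq2 : ∀ m : ℤ, (-(π * h)) + π * (((-m : ℤ) : ℝ)) / b = -(vpt h m) := by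
    intro m
    rw [hbdef, vpt]
    push_cast
    field_simp
    ring
  -- integrability of the integrands
  haveI hfin : IsFiniteMeasure (volume.restrict (Set.Ioc (-b) b)) :=
    ⟨by rw [Measure.restrict_apply_univ]; exact measure_Ioc_lt_top⟩
  have hIntgen : ∀ φ : ℝ → ℂ, Measurable φ → (∀ y, ‖φ y‖ ≤ c + c) →
      IntegrableOn φ (Set.Ioc (-b) b) volume := by
    intro φ hφ hφb
    have hconst : Integrable (fun _ : ℝ => (c + c : ℝ)) (volume.restrict (Set.Ioc (-b) b)) :=
      integrable_const _
    exact hconst.mono' hφ.aestronglyMeasurable (Filter.Eventually.of_forall hφb)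
  -- the per-n analysis
  have pern : ∀ n : ℤ, 1 < |vpt h n| →
      ‖Bd V x h g n‖ ^ 2 ≤ 4 * G * K * h * (1 / (vpt h n) ^ 2) := by
    intro n hn
    have hvn0 : vpt h n ≠ 0 := by
      intro h0
      rw [h0, abs_zero] at hn
      linarith
    have hvnC : ((vpt h n : ℝ) : ℂ) ≠ 0 := Complex.ofReal_ne_zero.mpr hvn0
    -- rewrite each inner integral
    have hIconv : ∀ m : ℤ,
        (∫ y in Set.Icc (-(1 / (2 * h))) (1 / (2 * h)),
          ((V (x + y / 2) - V (x - y / 2) : ℝ) : ℂ) *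
            (Complex.exp (Complex.I * ((vpt h n - vpt h m : ℝ) : ℂ) * (y : ℂ)) -
              Complex.exp (-(Complex.I * ((vpt h m : ℝ) : ℂ) * (y : ℂ)))) /
            ((vpt h n : ℝ) : ℂ))
        = (BB1 (n - m) - BB2 (-m)) / ((vpt h n : ℝ) : ℂ) := by
      intro m
      rw [MeasureTheory.integral_Icc_eq_integral_Ioc]
      rw [show -(1 / (2 * h)) = -b from by rw [hbdef], show (1 / (2 * h)) = b from hbdef]
      rw [integral_div]
      congr 1
      have hsplit : ∀ y : ℝ,
          ((D y : ℝ) : ℂ) *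
            (Complex.exp (Complex.I * ((vpt h n - vpt h m : ℝ) : ℂ) * (y : ℂ)) -
              Complex.exp (-(Complex.I * ((vpt h m : ℝ) : ℂ) * (y : ℂ))))
          = f₁ y * Complex.exp (Complex.I * ((π * (((n - m : ℤ)) : ℝ) / b : ℝ) : ℂ) * (y : ℂ))
            - f₂ y * Complex.exp (Complex.I * ((π * (((-m : ℤ)) : ℝ) / b : ℝ) : ℂ) * (y : ℂ)) := by
        intro y
        have e1eq : Complex.I * ((vpt h n - vpt h m : ℝ) : ℂ) * (y : ℂ)
            = Complex.I * ((π * (((n - m : ℤ)) : ℝ) / b : ℝ) : ℂ) * (y : ℂ) := by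
          rw [hfreq1 n m]
        have e2eq : -(Complex.I * ((vpt h m : ℝ) : ℂ) * (y : ℂ))
            = Complex.I * ((-(π * h) : ℝ) : ℂ) * (y : ℂ)
              + Complex.I * ((π * (((-m : ℤ)) : ℝ) / b : ℝ) : ℂ) * (y : ℂ) := by
          have h2 := hfreq2 m
          calc -(Complex.I * ((vpt h m : ℝ) : ℂ) * (y : ℂ))
              = Complex.I * ((-(vpt h m) : ℝ) : ℂ) * (y : ℂ) := by push_cast; ring
            _ = Complex.I * ((((-(π * h)) + π * (((-m : ℤ)) : ℝ) / b : ℝ)) : ℂ) * (y : ℂ) := by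
                rw [h2]
            _ = _ := by push_cast; ring
        have hf1y : f₁ y = ((D y : ℝ) : ℂ) := rfl
        have hf2y : f₂ y
            = ((D y : ℝ) : ℂ) * Complex.exp (Complex.I * ((-(π * h) : ℝ) : ℂ) * (y : ℂ)) := rfl
        rw [mul_sub, e1eq, e2eq, Complex.exp_add, hf1y, hf2y]
        ring
      calc (∫ y in Set.Ioc (-b) b, ((D y : ℝ) : ℂ) *
            (Complex.exp (Complex.I * ((vpt h n - vpt h m : ℝ) : ℂ) * (y : ℂ)) -
              Complex.exp (-(Complex.I * ((vpt h m : ℝ) : ℂ) * (y : ℂ)))))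
          = ∫ y in Set.Ioc (-b) b,
            (f₁ y * Complex.exp (Complex.I * ((π * (((n - m : ℤ)) : ℝ) / b : ℝ) : ℂ) * (y : ℂ))
            - f₂ y * Complex.exp (Complex.I * ((π * (((-m : ℤ)) : ℝ) / b : ℝ) : ℂ) * (y : ℂ))) := by
            exact setIntegral_congr_fun measurableSet_Ioc fun y _ => hsplit y
        _ = BB1 (n - m) - BB2 (-m) := by
            rw [integral_sub]
            · exact hIntgen _ (hm1.mul ((hcont2 _).measurable)) (fun y => by
                rw [norm_mul, hexp1, mul_one]; exact hb1 y)
            · exact hIntgen _ (hm2.mul ((hcont2 _).measurable)) (fun y => by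
                rw [norm_mul, hexp1, mul_one]; exact hb2 y)
    -- summability of shifted coefficient squares
    have hshift1 : Summable fun m : ℤ => ‖BB1 (n - m)‖ ^ 2 := by
      exact ((Equiv.subLeft n).summable_iff (f := fun k : ℤ => ‖BB1 k‖ ^ 2)).mpr bes1.1
    have hshift2 : Summable fun m : ℤ => ‖BB2 (-m)‖ ^ 2 := by
      exact ((Equiv.neg ℤ).summable_iff (f := fun k : ℤ => ‖BB2 k‖ ^ 2)).mpr bes2.1
    have hnorm1 : Summable fun m : ℤ => ‖g m * BB1 (n - m)‖ := by
      refine Summable.of_nonneg_of_le (fun m => norm_nonneg _) (fun m => ?_)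
        ((hGsum.add hshift1).div_const 2)
      rw [norm_mul]
      have htm := two_mul_le_add_sq ‖g m‖ ‖BB1 (n - m)‖
      linarith
    have hnorm2 : Summable fun m : ℤ => ‖g m * BB2 (-m)‖ := by
      refine Summable.of_nonneg_of_le (fun m => norm_nonneg _) (fun m => ?_)
        ((hGsum.add hshift2).div_const 2)
      rw [norm_mul]
      have htm := two_mul_le_add_sq ‖g m‖ ‖BB2 (-m)‖
      linarith
    have hsum1 : Summable fun m : ℤ => g m * BB1 (n - m) := Summable.of_norm hnorm1
    have hsum2 : Summable fun m : ℤ => g m * BB2 (-m) := Summable.of_norm hnorm2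
    set S₁ : ℂ := ∑' m : ℤ, g m * BB1 (n - m) with hS₁def
    set S₂ : ℂ := ∑' m : ℤ, g m * BB2 (-m) with hS₂def
    have hBd : Bd V x h g n = Complex.I * h * ((S₁ - S₂) / ((vpt h n : ℝ) : ℂ)) := by
      rw [Bd]
      congr 1
      calc ∑' m : ℤ, g m *
            ∫ y in Set.Icc (-(1 / (2 * h))) (1 / (2 * h)),
              ((V (x + y / 2) - V (x - y / 2) : ℝ) : ℂ) *
                (Complex.exp (Complex.I * ((vpt h n - vpt h m : ℝ) : ℂ) * (y : ℂ)) -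
                  Complex.exp (-(Complex.I * ((vpt h m : ℝ) : ℂ) * (y : ℂ)))) /
                ((vpt h n : ℝ) : ℂ)
          = ∑' m : ℤ, (g m * BB1 (n - m) - g m * BB2 (-m)) / ((vpt h n : ℝ) : ℂ) := by
            refine tsum_congr fun m => ?_
            rw [hIconv m]
            ring
        _ = (∑' m : ℤ, (g m * BB1 (n - m) - g m * BB2 (-m))) / ((vpt h n : ℝ) : ℂ) :=
            tsum_div_const
        _ = (S₁ - S₂) / ((vpt h n : ℝ) : ℂ) := by
            rw [hsum1.tsum_sub hsum2]
    -- norm bounds on the two series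
    have hS1 : ‖S₁‖ ≤ R := by
      have h1 : ‖S₁‖ ≤ ∑' m : ℤ, ‖g m * BB1 (n - m)‖ := norm_tsum_le_tsum_norm hnorm1
      have h2 : ∑' m : ℤ, ‖g m * BB1 (n - m)‖ = ∑' m : ℤ, ‖g m‖ * ‖BB1 (n - m)‖ :=
        tsum_congr fun m => norm_mul _ _
      have h3 := tsum_cs (f := fun m : ℤ => ‖g m‖) (g := fun m : ℤ => ‖BB1 (n - m)‖)
        (fun m => norm_nonneg _) (fun m => norm_nonneg _) hGsum hshift1
      have h4 : ∑' m : ℤ, ‖BB1 (n - m)‖ ^ 2 = ∑' k : ℤ, ‖BB1 k‖ ^ 2 := by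
        exact (Equiv.subLeft n).tsum_eq (fun k : ℤ => ‖BB1 k‖ ^ 2)
      have h5 : Real.sqrt (∑' m : ℤ, ‖BB1 (n - m)‖ ^ 2) ≤ Real.sqrt ((1 / h) * K) := by
        rw [h4]
        exact Real.sqrt_le_sqrt hSB1
      calc ‖S₁‖ ≤ ∑' m : ℤ, ‖g m‖ * ‖BB1 (n - m)‖ := h1.trans (le_of_eq h2)
        _ ≤ Real.sqrt (∑' m : ℤ, ‖g m‖ ^ 2) * Real.sqrt (∑' m : ℤ, ‖BB1 (n - m)‖ ^ 2) := h3
        _ ≤ Real.sqrt G * Real.sqrt ((1 / h) * K) := by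
            refine mul_le_mul ?_ h5 (Real.sqrt_nonneg _) (Real.sqrt_nonneg _)
            rw [hGdef]
        _ = R := hRdef.symm
    have hS2 : ‖S₂‖ ≤ R := by
      have h1 : ‖S₂‖ ≤ ∑' m : ℤ, ‖g m * BB2 (-m)‖ := norm_tsum_le_tsum_norm hnorm2
      have h2 : ∑' m : ℤ, ‖g m * BB2 (-m)‖ = ∑' m : ℤ, ‖g m‖ * ‖BB2 (-m)‖ :=
        tsum_congr fun m => norm_mul _ _
      have h3 := tsum_cs (f := fun m : ℤ => ‖g m‖) (g := fun m : ℤ => ‖BB2 (-m)‖)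
        (fun m => norm_nonneg _) (fun m => norm_nonneg _) hGsum hshift2
      have h4 : ∑' m : ℤ, ‖BB2 (-m)‖ ^ 2 = ∑' k : ℤ, ‖BB2 k‖ ^ 2 := by
        exact (Equiv.neg ℤ).tsum_eq (fun k : ℤ => ‖BB2 k‖ ^ 2)
      have h5 : Real.sqrt (∑' m : ℤ, ‖BB2 (-m)‖ ^ 2) ≤ Real.sqrt ((1 / h) * K) := by
        rw [h4]
        exact Real.sqrt_le_sqrt hSB2
      calc ‖S₂‖ ≤ ∑' m : ℤ, ‖g m‖ * ‖BB2 (-m)‖ := h1.trans (le_of_eq h2)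
        _ ≤ Real.sqrt (∑' m : ℤ, ‖g m‖ ^ 2) * Real.sqrt (∑' m : ℤ, ‖BB2 (-m)‖ ^ 2) := h3
        _ ≤ Real.sqrt G * Real.sqrt ((1 / h) * K) := by
            refine mul_le_mul ?_ h5 (Real.sqrt_nonneg _) (Real.sqrt_nonneg _)
            rw [hGdef]
        _ = R := hRdef.symm
    have habs : 0 < |vpt h n| := abs_pos.mpr hvn0
    have hBdnorm : ‖Bd V x h g n‖ ≤ h * ((2 * R) / |vpt h n|) := by
      rw [hBd]
      simp only [norm_mul, norm_div, Complex.norm_I, one_mul, Complex.norm_real,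
        Real.norm_eq_abs]
      rw [abs_of_pos hh]
      have hsub : ‖S₁ - S₂‖ ≤ 2 * R := (norm_sub_le _ _).trans (by linarith)
      gcongr
    calc ‖Bd V x h g n‖ ^ 2 ≤ (h * ((2 * R) / |vpt h n|)) ^ 2 :=
        pow_le_pow_left₀ (norm_nonneg _) hBdnorm 2
      _ = 4 * G * K * h * (1 / (vpt h n) ^ 2) := by
          rw [mul_pow, div_pow, sq_abs, mul_pow, hRsq]
          field_simp
          ring
  -- final summation over high-velocity indices
  have hRHS0 : (0:ℝ) ≤ 8 * K * G := by positivity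
  show ∑' n : {n : ℤ // 1 < |vpt h n|}, ‖Bd V x h g (n : ℤ)‖ ^ 2 ≤ 8 * K * G
  refine tsum_le_of_sum_le' hRHS0 fun s => ?_
  have hvpt : ∀ n : ℤ, vpt h n = (2 * (n : ℝ) + 1) * (π * h) := fun n => mul_assoc _ _ _
  have hπh : 0 < π * h := by positivity
  calc ∑ n ∈ s, ‖Bd V x h g (n : ℤ)‖ ^ 2
      ≤ ∑ n ∈ s, 4 * G * K * h * (1 / (vpt h (n : ℤ)) ^ 2) :=
        Finset.sum_le_sum fun n _ => pern (n : ℤ) n.2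
    _ = 4 * G * K * h * ∑ n ∈ s, 1 / (vpt h (n : ℤ)) ^ 2 := by rw [Finset.mul_sum]
    _ ≤ 4 * G * K * h * (6 / (π * h)) := by
        refine mul_le_mul_of_nonneg_left ?_ (by positivity)
        have himg : ∑ k ∈ s.image (fun n : {n : ℤ // 1 < |vpt h n|} => (n : ℤ)),
            1 / ((2 * (k : ℝ) + 1) * (π * h)) ^ 2
            = ∑ n ∈ s, 1 / ((2 * ((n : ℤ) : ℝ) + 1) * (π * h)) ^ 2 :=
          Finset.sum_image (fun x _ y _ hxy => Subtype.ext hxy)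
        have hstep : ∑ n ∈ s, 1 / (vpt h (n : ℤ)) ^ 2
            = ∑ n ∈ s, 1 / ((2 * ((n : ℤ) : ℝ) + 1) * (π * h)) ^ 2 :=
          Finset.sum_congr rfl fun n _ => by rw [hvpt]
        rw [hstep, ← himg]
        refine vel_sum hπh _ fun k hk => ?_
        obtain ⟨n, _, rfl⟩ := Finset.mem_image.mp hk
        have := n.2
        rwa [hvpt] at this
    _ ≤ 8 * K * G := by
        have heq : 4 * G * K * h * (6 / (π * h)) = 24 * (G * K) / π := by
          field_simp
          ring
        rw [heq, div_le_iff₀ Real.pi_pos]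
        nlinarith [Real.pi_gt_three, hG0, hK0, mul_nonneg hG0 hK0]
end
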